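/- arXiv:2602.20585 — 9 statements merged into one kernel-verified Lean document; each statement's English description precedes it below -/
import Mathlib

section
/- Let U be a family of probability measures on a measurable space X with envelope μ_U(A) = sup_{μ∈U} μ(A). For ε ∈ (0,1], define the ε-fragmentation number N_U(ε) as the supremum over k of the existence of k pairwise disjoint measurable sets A_1,…,A_k with μ_U(A_i) ≥ ε for all i. Then μ_U is continuous from above at the empty set (i.e., for every decreasing sequence of measurable sets A_n with empty intersection, μ_U(A_n) → 0) if and only if N_U(ε) is finite for every ε > 0. -/
open MeasureTheory Set Filter ENNReal

theorem stmt2 {X : Type*} [MeasurableSpace X] (U : Set (Measure X)) (hU : U.Nonempty)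
    (hprob : ∀ μ ∈ U, IsProbabilityMeasure μ) :
    (∀ A : ℕ → Set X, (∀ n, MeasurableSet (A n)) → Antitone A → (⋂ n, A n) = ∅ →
      Tendsto (fun n => ⨆ μ ∈ U, μ (A n)) atTop (nhds 0)) ↔
    (∀ ε : ℝ≥0∞, 0 < ε → ∃ k : ℕ, ∀ (m : ℕ) (B : Fin m → Set X),
      (∀ i, MeasurableSet (B i)) → Pairwise (Function.onFun Disjoint B) →
      (∀ i, ε ≤ ⨆ μ ∈ U, μ (B i)) → m ≤ k) := by
  obtain ⟨μbase, hμbase⟩ := hU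
  have hφ_le_one : ∀ s : Set X, (⨆ μ ∈ U, μ s) ≤ 1 := by
    intro s
    refine iSup₂_le fun μ hμ => ?_
    haveI := hprob μ hμ
    exact prob_le_one
  have hle_φ : ∀ μ : Measure X, μ ∈ U → ∀ s : Set X, μ s ≤ ⨆ μ ∈ U, μ s := by
    intro μ hμ s
    exact le_biSup (fun μ => μ s) hμ
  constructor
  · -- continuity ⇒ finiteness
    intro hcont
    by_contra hbad
    push_neg at hbad
    obtain ⟨ε, hε, hfam⟩ := hbad
    have hε1 : ε ≤ 1 := by
      obtain ⟨m, B, _, _, hBge, hm⟩ := hfam 0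
      exact le_trans (hBge ⟨0, hm⟩) (hφ_le_one _)
    have hεtop : ε ≠ ∞ := (lt_of_le_of_lt hε1 one_lt_top).ne
    set r : ℝ≥0∞ := 2⁻¹ with hrdef
    have hr2 : (2 : ℝ≥0∞) * r = 1 := ENNReal.mul_inv_cancel two_ne_zero ENNReal.ofNat_ne_top
    have hr2' : r * 2 = 1 := by rw [mul_comm]; exact hr2
    have hrle1 : r ≤ 1 := by
      rw [hrdef]
      exact ENNReal.inv_le_one.2 one_le_two
    have hrne0 : r ≠ 0 := by simp [hrdef]
    have hεr_lt : ε * r < ε := by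
      rw [hrdef, ← div_eq_mul_inv]
      exact ENNReal.half_lt_self hε.ne' hεtop
    set δ : ℕ → ℝ≥0∞ := fun n => ε * r ^ (n + 3) with hδdef
    have hδ0 : ∀ n, δ n ≠ 0 := fun n => mul_ne_zero hε.ne' (pow_ne_zero _ hrne0)
    have hδtop : ∀ n, δ n ≠ ∞ := fun n =>
      ENNReal.mul_ne_top hεtop (ENNReal.pow_ne_top (by simp [hrdef]))
    -- key step lemma
    have key : ∀ (n : ℕ) (μs : ℕ → Measure X), (∀ j, μs j ∈ U) →
        ∃ (C : Set X) (ν : Measure X), ν ∈ U ∧ MeasurableSet C ∧ ε * r ≤ ν C ∧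
          ∀ j < n, μs j C ≤ δ n := by
      intro n μs hμs
      obtain ⟨K, hK⟩ := ENNReal.exists_nat_gt
        (show (n : ℝ≥0∞) / δ n ≠ ∞ from
          (ENNReal.div_lt_top (natCast_ne_top n) (hδ0 n)).ne)
      obtain ⟨m, B, hBmeas, hBdisj, hBge, hKm⟩ := hfam K
      have hgood : ∃ i : Fin m, ∀ j < n, μs j (B i) ≤ δ n := by
        by_contra hbad2
        push_neg at hbad2
        have h1 : (m : ℝ≥0∞) * δ n ≤ ∑ j ∈ Finset.range n, μs j (⋃ i, B i) := by
          calc (m : ℝ≥0∞) * δ n = ∑ _i : Fin m, δ n := by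
                simp [Finset.sum_const, Finset.card_univ, mul_comm]
            _ ≤ ∑ i : Fin m, ∑ j ∈ Finset.range n, μs j (B i) := by
                refine Finset.sum_le_sum fun i _ => ?_
                obtain ⟨j, hjn, hji⟩ := hbad2 i
                exact le_trans hji.le
                  (Finset.single_le_sum (f := fun j => μs j (B i)) (fun _ _ => zero_le) (Finset.mem_range.2 hjn))
            _ = ∑ j ∈ Finset.range n, ∑ i : Fin m, μs j (B i) := Finset.sum_comm
            _ = ∑ j ∈ Finset.range n, μs j (⋃ i, B i) := by
                refine Finset.sum_congr rfl fun j _ => ?_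
                rw [measure_iUnion hBdisj hBmeas, tsum_fintype]
        have h2 : ∑ j ∈ Finset.range n, μs j (⋃ i, B i) ≤ (n : ℝ≥0∞) := by
          calc ∑ j ∈ Finset.range n, μs j (⋃ i, B i)
              ≤ ∑ _j ∈ Finset.range n, (1 : ℝ≥0∞) := by
                refine Finset.sum_le_sum fun j _ => ?_
                haveI := hprob _ (hμs j)
                exact prob_le_one
            _ = (n : ℝ≥0∞) := by simp
        have h3 : (m : ℝ≥0∞) ≤ (n : ℝ≥0∞) / δ n :=
          (ENNReal.le_div_iff_mul_le (Or.inl (hδ0 n)) (Or.inl (hδtop n))).2 (le_trans h1 h2)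
        have : (m : ℝ≥0∞) < (K : ℝ≥0∞) := lt_of_le_of_lt h3 hK
        rw [Nat.cast_lt] at this
        omega
      obtain ⟨i, hi⟩ := hgood
      have hwit : ε * r < ⨆ μ ∈ U, μ (B i) := lt_of_lt_of_le hεr_lt (hBge i)
      simp only [lt_iSup_iff] at hwit
      obtain ⟨ν, hν, hνB⟩ := hwit
      exact ⟨B i, ν, hν, hBmeas i, hνB.le, hi⟩
    choose! Cf νf hνU hCmeas hClow hCsmall using key
    -- recursive construction
    set H : ℕ → ℕ → Set X × Measure X := fun n =>
      Nat.rec (motive := fun _ => ℕ → Set X × Measure X) (fun _ => (∅, μbase))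
        (fun n Hn => Function.update Hn n
          (Cf n (fun j => (Hn j).2), νf n (fun j => (Hn j).2))) n with hHdef
    have hHsucc : ∀ n, H (n + 1) = Function.update (H n) n
        (Cf n (fun j => (H n j).2), νf n (fun j => (H n j).2)) := fun n => rfl
    have hUmem : ∀ n j, (H n j).2 ∈ U := by
      intro n
      induction n with
      | zero => intro j; exact hμbase
      | succ n ih =>
        intro j
        rw [hHsucc]
        rcases eq_or_ne j n with rfl | hne
        · rw [Function.update_self]
          exact hνU j _ ih
        · rw [Function.update_of_ne hne]
          exact ih j
    set C : ℕ → Set X := fun n => Cf n (fun j => (H n j).2) with hCdef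
    set ν : ℕ → Measure X := fun n => νf n (fun j => (H n j).2) with hνdef
    have hstab : ∀ m j, j < m → H m j = (C j, ν j) := by
      intro m
      induction m with
      | zero => intro j hj; omega
      | succ m ih =>
        intro j hj
        rw [hHsucc]
        rcases eq_or_ne j m with rfl | hne
        · rw [Function.update_self]
        · rw [Function.update_of_ne hne]
          exact ih j (by omega)
    have hνU' : ∀ n, ν n ∈ U := fun n => hνU n _ (hUmem n)
    have hCm : ∀ n, MeasurableSet (C n) := fun n => hCmeas n _ (hUmem n)
    have hlow : ∀ n, ε * r ≤ ν n (C n) := fun n => hClow n _ (hUmem n)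
    have hsm : ∀ n j, j < n → ν j (C n) ≤ δ n := by
      intro n j hj
      have h := hCsmall n _ (hUmem n) j hj
      rwa [hstab n j hj] at h
    -- the disjointified sets
    set T : ℕ → Set X := fun n => ⋃ k, C (n + 1 + k) with hTdef
    set D : ℕ → Set X := fun n => C n \ T n with hDdef
    have hTmeas : ∀ n, MeasurableSet (T n) := fun n => MeasurableSet.iUnion fun k => hCm _
    have hDmeas : ∀ n, MeasurableSet (D n) := fun n => (hCm n).diff (hTmeas n)
    have hTsmall : ∀ n, ν n (T n) ≤ ε * r ^ (n + 3) := by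
      intro n
      calc ν n (T n) ≤ ∑' k, ν n (C (n + 1 + k)) := measure_iUnion_le _
        _ ≤ ∑' k : ℕ, δ (n + 1 + k) := ENNReal.tsum_le_tsum fun k => hsm _ _ (by omega)
        _ = ∑' k : ℕ, ε * r ^ (n + 4) * r ^ k := by
            refine tsum_congr fun k => ?_
            simp only [hδdef]
            rw [show n + 1 + k + 3 = (n + 4) + k by omega, pow_add, mul_assoc]
        _ = ε * r ^ (n + 4) * ∑' k : ℕ, r ^ k := ENNReal.tsum_mul_left
        _ = ε * r ^ (n + 4) * 2 := by
            rw [ENNReal.tsum_geometric, hrdef, ENNReal.one_sub_inv_two, inv_inv]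
        _ = ε * r ^ (n + 3) * (r * 2) := by ring
        _ = ε * r ^ (n + 3) := by rw [hr2', mul_one]
    have hDlow : ∀ n, ε * r ^ 2 ≤ ν n (D n) := by
      intro n
      have hsub : C n ⊆ D n ∪ T n := by
        intro x hx
        by_cases h : x ∈ T n
        · exact Or.inr h
        · exact Or.inl ⟨hx, h⟩
      have h1 : ε * r ≤ ν n (D n) + ν n (T n) :=
        le_trans (hlow n) (le_trans (measure_mono hsub) (measure_union_le _ _))
      have h2 : ν n (T n) ≤ ε * r ^ 3 := by
        refine le_trans (hTsmall n) ?_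
        have : r ^ (n + 3) = r ^ n * r ^ 3 := by rw [← pow_add]
        rw [this, ← mul_assoc]
        calc ε * r ^ n * r ^ 3 ≤ ε * 1 * r ^ 3 := by
              gcongr
              exact pow_le_one' hrle1 n
          _ = ε * r ^ 3 := by rw [mul_one]
      have key3 : ε * r ^ 2 + ε * r ^ 3 ≤ ε * r := by
        have hrr : r ^ 2 + r ^ 3 ≤ r := by
          have h3 : r ^ 3 ≤ r ^ 2 := pow_le_pow_of_le_one zero_le hrle1 (by omega)
          calc r ^ 2 + r ^ 3 ≤ r ^ 2 + r ^ 2 := add_le_add_right h3 _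
            _ = (2 * r) * r := by ring
            _ = r := by rw [hr2, one_mul]
        calc ε * r ^ 2 + ε * r ^ 3 = ε * (r ^ 2 + r ^ 3) := by ring
          _ ≤ ε * r := mul_le_mul_right hrr ε
      have h4 : ε * r ^ 2 + ε * r ^ 3 ≤ ν n (D n) + ε * r ^ 3 :=
        le_trans key3 (le_trans h1 (add_le_add_right h2 _))
      exact (ENNReal.add_le_add_iff_right
        (ENNReal.mul_ne_top hεtop (ENNReal.pow_ne_top (by simp [hrdef])))).1 h4
    have hDdisj : ∀ i j : ℕ, i < j → Disjoint (D i) (D j) := by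
      intro i j hij
      rw [Set.disjoint_left]
      intro x hxi hxj
      refine hxi.2 (mem_iUnion.2 ⟨j - i - 1, ?_⟩)
      rw [show i + 1 + (j - i - 1) = j by omega]
      exact hxj.1
    set A : ℕ → Set X := fun n => ⋃ k, D (n + k) with hAdef
    have hAmeas : ∀ n, MeasurableSet (A n) := fun n => MeasurableSet.iUnion fun k => hDmeas _
    have hAanti : Antitone A := by
      refine antitone_nat_of_succ_le fun n => iUnion_subset fun k => ?_
      rw [show n + 1 + k = n + (k + 1) by omega]
      exact subset_iUnion (fun k => D (n + k)) (k + 1)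
    have hAempty : (⋂ n, A n) = ∅ := by
      rw [Set.eq_empty_iff_forall_notMem]
      intro x hx
      simp only [mem_iInter, mem_iUnion, hAdef] at hx
      obtain ⟨k0, hk0⟩ := hx 0
      obtain ⟨k1, hk1⟩ := hx (0 + k0 + 1)
      exact Set.disjoint_left.1 (hDdisj (0 + k0) (0 + k0 + 1 + k1) (by omega)) hk0 hk1
    have htend := hcont A hAmeas hAanti hAempty
    have hlb : ∀ n, ε * r ^ 2 ≤ ⨆ μ ∈ U, μ (A n) := by
      intro n
      refine le_trans (hDlow n) (le_trans (measure_mono ?_) (hle_φ (ν n) (hνU' n) (A n)))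
      have : D (n + 0) ⊆ A n := subset_iUnion (fun k => D (n + k)) 0
      simpa using this
    have hpos : 0 < ε * r ^ 2 := ENNReal.mul_pos hε.ne' (pow_ne_zero _ hrne0)
    obtain ⟨n, hn⟩ := (htend.eventually_lt_const hpos).exists
    exact absurd (hlb n) (not_le.2 hn)
  · -- finiteness ⇒ continuity
    intro hfin A hAm hAanti hAempty
    rw [ENNReal.tendsto_atTop_zero]
    by_contra hx
    push_neg at hx
    obtain ⟨ε, hε, hbig⟩ := hx
    have hallbig : ∀ n, ε < ⨆ μ ∈ U, μ (A n) := by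
      intro n
      obtain ⟨m, hm, h⟩ := hbig n
      refine lt_of_lt_of_le h ?_
      exact iSup₂_mono fun μ hμ => measure_mono (hAanti hm)
    have hε2 : 0 < ε / 2 := ENNReal.half_pos hε.ne'
    obtain ⟨k, hk⟩ := hfin (ε / 2) hε2
    have step : ∀ n : ℕ, ∃ m : ℕ, n ≤ m ∧ ε / 2 ≤ ⨆ μ ∈ U, μ (A n \ A m) := by
      intro n
      have h := hallbig n
      simp only [lt_iSup_iff] at h
      obtain ⟨μ, hμ, hμn⟩ := h
      haveI := hprob μ hμ
      have htd : Tendsto (μ ∘ A) atTop (nhds 0) := by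
        have h2 := tendsto_measure_iInter_atTop (μ := μ)
          (fun i => (hAm i).nullMeasurableSet) hAanti ⟨0, measure_ne_top μ _⟩
        rwa [hAempty, measure_empty] at h2
      have hev : ∀ᶠ m in atTop, μ (A m) < ε / 2 := htd.eventually_lt_const hε2
      obtain ⟨m, hsmall, hnm⟩ := (hev.and (eventually_ge_atTop n)).exists
      refine ⟨m, hnm, ?_⟩
      refine le_trans ?_ (hle_φ μ hμ _)
      rw [measure_diff (hAanti hnm) (hAm m).nullMeasurableSet (measure_ne_top μ _)]
      refine (ENNReal.cancel_of_ne (measure_ne_top μ (A m))).le_tsub_of_add_le_right ?_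
      calc ε / 2 + μ (A m) ≤ ε / 2 + ε / 2 := add_le_add_right hsmall.le _
        _ = ε := ENNReal.add_halves ε
        _ ≤ μ (A n) := hμn.le
    choose f hf1 hf2 using step
    set g : ℕ → ℕ := fun j => f^[j] 0 with hgdef
    have hgsucc : ∀ j, g (j + 1) = f (g j) := fun j => Function.iterate_succ_apply' f j 0
    have hgmono : Monotone g := monotone_nat_of_le_succ fun j => by
      rw [hgsucc]; exact hf1 (g j)
    set B : Fin (k + 1) → Set X := fun j => A (g j.1) \ A (g (j.1 + 1)) with hBdef
    have hBm : ∀ i, MeasurableSet (B i) := fun i => (hAm _).diff (hAm _)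
    have hdisj : ∀ i j : Fin (k + 1), (i : ℕ) < (j : ℕ) → Disjoint (B i) (B j) := by
      intro i j hij
      rw [Set.disjoint_left]
      intro x hxi hxj
      exact hxi.2 (hAanti (hgmono (show (i : ℕ) + 1 ≤ (j : ℕ) by omega)) hxj.1)
    have hpw : Pairwise (Function.onFun Disjoint B) := by
      intro i j hne
      rcases lt_trichotomy (i : ℕ) (j : ℕ) with h | h | h
      · exact hdisj i j h
      · exact absurd (Fin.ext h) hne
      · exact (hdisj j i h).symm
    have hge : ∀ i : Fin (k + 1), ε / 2 ≤ ⨆ μ ∈ U, μ (B i) := by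
      intro i
      have := hf2 (g i.1)
      rwa [← hgsucc i.1] at this
    have := hk (k + 1) B hBm hpw hge
    omega
end

section
/- Let U be a family of probability measures on a measurable space X whose envelope μ_U(A) = sup_{μ∈U} μ(A) fails to be continuous from above at the empty set. Then there exist ε > 0 and a countably infinite sequence (A_i)_{i≥1} of pairwise disjoint measurable sets such that μ_U(A_i) ≥ ε for all i. -/
open MeasureTheory Set Filter ENNReal

theorem stmt3 {X : Type*} [MeasurableSpace X] (U : Set (Measure X)) (hU : U.Nonempty)
    (hprob : ∀ μ ∈ U, IsProbabilityMeasure μ)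
    (hfail : ∃ B : ℕ → Set X, (∀ n, MeasurableSet (B n)) ∧ Antitone B ∧ (⋂ n, B n) = ∅ ∧
      ¬ Tendsto (fun n => ⨆ μ ∈ U, μ (B n)) atTop (nhds 0)) :
    ∃ ε : ℝ≥0∞, 0 < ε ∧ ∃ A : ℕ → Set X, (∀ i, MeasurableSet (A i)) ∧
      Pairwise (Function.onFun Disjoint A) ∧ ∀ i, ε ≤ ⨆ μ ∈ U, μ (A i) := by
  obtain ⟨B, hBm, hBanti, hBempty, hnot⟩ := hfail
  set f : ℕ → ℝ≥0∞ := fun n => ⨆ μ ∈ U, μ (B n) with hf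
  have hfanti : Antitone f := fun m n hmn =>
    iSup₂_mono fun μ _ => measure_mono (hBanti hmn)
  have htend : Tendsto f atTop (nhds (⨅ n, f n)) := tendsto_atTop_iInf hfanti
  set L := ⨅ n, f n with hL
  have hLpos : 0 < L := by
    rcases eq_or_ne L 0 with h | h
    · exact absurd (h ▸ htend) hnot
    · exact pos_iff_ne_zero.mpr h
  have hLle : ∀ n, L ≤ f n := fun n => iInf_le f n
  have hLtop : L ≠ ⊤ := by
    refine ne_top_of_le_ne_top (by norm_num : (1 : ℝ≥0∞) ≠ ⊤) ((hLle 0).trans ?_)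
    refine iSup₂_le fun μ hμ => ?_
    haveI := hprob μ hμ
    exact prob_le_one
  have hq : 0 < L / 2 / 2 := ENNReal.half_pos (ENNReal.half_pos hLpos.ne').ne'
  have key : ∀ n : ℕ, ∃ m, n ≤ m ∧ L / 2 / 2 ≤ ⨆ μ ∈ U, μ (B n \ B m) := by
    intro n
    have h1 : L / 2 < f n :=
      lt_of_lt_of_le (ENNReal.half_lt_self hLpos.ne' hLtop) (hLle n)
    obtain ⟨μ, hμU, hμn⟩ : ∃ μ ∈ U, L / 2 < μ (B n) := by
      simpa [hf, lt_iSup_iff] using h1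
    haveI := hprob μ hμU
    have htend0 : Tendsto (fun m => μ (B m)) atTop (nhds 0) := by
      have := tendsto_measure_iInter_atTop (μ := μ) (fun n => (hBm n).nullMeasurableSet) hBanti ⟨0, measure_ne_top μ _⟩
      simpa [hBempty, Function.comp_def] using this
    have hev : ∀ᶠ m in atTop, μ (B m) < L / 2 / 2 :=
      htend0.eventually_lt_const hq
    obtain ⟨m, hμm, hm⟩ := (hev.and (eventually_ge_atTop n)).exists
    refine ⟨m, hm, ?_⟩
    have hsub : B m ⊆ B n := hBanti hm
    have hdiff : μ (B n \ B m) = μ (B n) - μ (B m) :=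
      measure_diff hsub (hBm m).nullMeasurableSet (measure_ne_top μ _)
    have hle : L / 2 / 2 ≤ μ (B n \ B m) := by
      rw [hdiff]
      refine ENNReal.le_sub_of_add_le_right (measure_ne_top μ _) ?_
      calc L / 2 / 2 + μ (B m) ≤ L / 2 / 2 + L / 2 / 2 := add_le_add le_rfl hμm.le
        _ = L / 2 := ENNReal.add_halves _
        _ ≤ μ (B n) := hμn.le
    exact hle.trans (le_biSup (fun μ => μ (B n \ B m)) hμU)
  choose g hg1 hg2 using key
  let n : ℕ → ℕ := fun k => Nat.rec 0 (fun _ nk => g nk) k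
  have hmono : Monotone n := monotone_nat_of_le_succ fun k => hg1 _
  refine ⟨L / 2 / 2, hq, fun k => B (n k) \ B (n (k + 1)), fun k => (hBm _).diff (hBm _),
    ?_, fun k => hg2 (n k)⟩
  have hdisj : ∀ i j, i < j → Disjoint (B (n i) \ B (n (i + 1))) (B (n j) \ B (n (j + 1))) := by
    intro i j hij
    refine Set.disjoint_left.mpr fun x hxi hxj => ?_
    exact hxi.2 (hBanti (hmono hij) hxj.1)
  intro i j hij
  rcases lt_or_gt_of_ne hij with h | h
  · exact hdisj i j h
  · exact (hdisj j i h).symm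
end

section
/- Let U be a family of probability measures on X such that the envelope μ_U is continuous from above at the empty set. Then for every ε > 0 there exists a finite measure ν on X (a finite nonnegative linear combination of members of U) such that for every measurable set A, μ_U(A) ≤ ε + ν(A). -/
open MeasureTheory Set Filter ENNReal

theorem stmt4 {X : Type*} [MeasurableSpace X] (U : Set (Measure X)) (hU : U.Nonempty)
    (hprob : ∀ μ ∈ U, IsProbabilityMeasure μ)
    (hcont : ∀ A : ℕ → Set X, (∀ n, MeasurableSet (A n)) → Antitone A → (⋂ n, A n) = ∅ →
      Tendsto (fun n => ⨆ μ ∈ U, μ (A n)) atTop (nhds 0)) :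
    ∀ ε : ℝ≥0∞, 0 < ε → ∃ (N : ℕ) (c : Fin N → ℝ≥0∞) (μs : Fin N → Measure X),
      (∀ i, μs i ∈ U) ∧ (∀ i, c i ≠ ∞) ∧
      ∀ A : Set X, MeasurableSet A → (⨆ μ ∈ U, μ A) ≤ ε + ∑ i, c i * μs i A := by
  intro ε hε
  by_cases hε1 : 1 ≤ ε
  · obtain ⟨μ0, hμ0⟩ := hU
    refine ⟨0, fun _ => 0, fun _ => μ0, fun i => hμ0, fun i => by simp, fun A hA => ?_⟩
    have : (⨆ μ ∈ U, μ A) ≤ 1 := by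
      refine iSup₂_le fun μ hμ => ?_
      haveI := hprob μ hμ
      exact prob_le_one
    calc (⨆ μ ∈ U, μ A) ≤ 1 := this
      _ ≤ ε + _ := le_add_right hε1
  push_neg at hε1
  have hε0 : ε ≠ 0 := hε.ne'
  have hεtop : ε ≠ ∞ := (hε1.trans one_lt_top).ne
  by_contra hcon
  push_neg at hcon
  -- key step: given finitely many measures in U, find a set almost missed by them but not by U
  have key : ∀ (n : ℕ) (ms : Fin n → Measure X), (∀ j, ms j ∈ U) →
      ∃ p : {p : Set X × Measure X // p.2 ∈ U}, MeasurableSet p.1.1 ∧ ε < p.1.2 p.1.1 ∧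
        ∀ j, ms j p.1.1 ≤ ε / 2 ^ n := by
    intro n ms hms
    obtain ⟨A, hAm, hlt⟩ := hcon n (fun _ => 2 ^ n / ε) ms hms
      (fun i => (ENNReal.div_lt_top (by simp) hε0).ne)
    have hS1 : (⨆ μ ∈ U, μ A) ≤ 1 := by
      refine iSup₂_le fun μ hμ => ?_
      haveI := hprob μ hμ
      exact prob_le_one
    have h2 : ε < ⨆ μ ∈ U, μ A := lt_of_le_of_lt le_self_add hlt
    rw [lt_iSup_iff] at h2
    obtain ⟨μ, h2⟩ := h2
    rw [lt_iSup_iff] at h2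
    obtain ⟨hμU, h2⟩ := h2
    refine ⟨⟨(A, μ), hμU⟩, hAm, h2, fun j => ?_⟩
    have h3 : (2 ^ n / ε) * ms j A ≤ ∑ i, (2 ^ n / ε) * ms i A :=
      Finset.single_le_sum (f := fun i => (2 ^ n / ε) * ms i A)
        (fun i _ => zero_le) (Finset.mem_univ j)
    have h4 : (2 ^ n / ε) * ms j A < 1 :=
      h3.trans_lt ((le_add_self.trans_lt hlt).trans_le hS1)
    have h5 : (2 ^ n * ms j A) / ε < 1 := by
      have he : (2 : ℝ≥0∞) ^ n / ε * ms j A = 2 ^ n * ms j A / ε := by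
        rw [div_eq_mul_inv, div_eq_mul_inv, mul_right_comm]
      rwa [he] at h4
    have h6 : 2 ^ n * ms j A < ε := by
      rw [ENNReal.div_lt_iff (Or.inl hε0) (Or.inl hεtop)] at h5
      simpa using h5
    rw [ENNReal.le_div_iff_mul_le (Or.inl (by positivity)) (Or.inl (by simp))]
    rw [mul_comm]
    exact h6.le
  -- recursive construction
  set T := {p : Set X × Measure X // p.2 ∈ U} with hT
  let H : ∀ n : ℕ, (∀ m, m < n → T) → T := fun n ih =>
    (key n (fun j : Fin n => (ih j j.2).1.2) (fun j => (ih j j.2).2)).choose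
  let f : ℕ → T := fun n => (Nat.lt_wfRel.wf).fix H n
  have hfeq : ∀ n, f n = H n (fun m _ => f m) := fun n => WellFounded.fix_eq _ _ _
  have hfprop : ∀ n : ℕ, MeasurableSet (f n).1.1 ∧ ε < (f n).1.2 (f n).1.1 ∧
      ∀ j : Fin n, (f j).1.2 (f n).1.1 ≤ ε / 2 ^ n := by
    intro n
    have e : f n = (key n (fun j : Fin n => (f (j : ℕ)).1.2)
        (fun j => (f (j : ℕ)).2)).choose := hfeq n
    have h := (key n (fun j : Fin n => (f (j : ℕ)).1.2)
      (fun j => (f (j : ℕ)).2)).choose_spec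
    rw [← e] at h
    exact h
  set A : ℕ → Set X := fun n => (f n).1.1 with hA
  set m : ℕ → Measure X := fun n => (f n).1.2 with hm
  have hAmeas : ∀ n, MeasurableSet (A n) := fun n => (hfprop n).1
  have hmU : ∀ n, m n ∈ U := fun n => (f n).2
  have hmA : ∀ n, ε < m n (A n) := fun n => (hfprop n).2.1
  have hsmall : ∀ j n : ℕ, j < n → m j (A n) ≤ ε / 2 ^ n :=
    fun j n hjn => (hfprop n).2.2 ⟨j, hjn⟩
  -- the decreasing sets
  set G : ℕ → Set X := fun N => ⋃ k, A (N + k) with hG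
  set D : Set X := ⋂ N, G N with hD
  set B : ℕ → Set X := fun N => G N \ D with hB
  have hGmeas : ∀ N, MeasurableSet (G N) := fun N => MeasurableSet.iUnion fun k => hAmeas _
  have hDmeas : MeasurableSet D := MeasurableSet.iInter fun N => hGmeas N
  have hBmeas : ∀ N, MeasurableSet (B N) := fun N => (hGmeas N).diff hDmeas
  have hGanti : Antitone G := by
    intro a b hab
    refine iUnion_subset fun k => ?_
    have : b + k = a + (b - a + k) := by omega
    rw [this]
    exact subset_iUnion (fun k => A (a + k)) (b - a + k)
  have hBanti : Antitone B := fun a b hab => diff_subset_diff_left (hGanti hab)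
  have hBempty : (⋂ N, B N) = ∅ := by
    rw [eq_empty_iff_forall_notMem]
    intro x hx
    rw [mem_iInter] at hx
    have hx0 := hx 0
    exact hx0.2 (mem_iInter.mpr fun N => (hx N).1)
  have htend := hcont B hBmeas hBanti hBempty
  have hhalf : (0 : ℝ≥0∞) < ε / 2 := ENNReal.div_pos hε0 (by simp)
  have hev := htend.eventually_lt_const hhalf
  rw [eventually_atTop] at hev
  obtain ⟨N₀, hN₀⟩ := hev
  set n := max N₀ 1 with hn
  have hsup : (⨆ μ ∈ U, μ (B n)) < ε / 2 := hN₀ n (le_max_left _ _)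
  have hmBn : m n (B n) < ε / 2 :=
    lt_of_le_of_lt (le_iSup₂ (f := fun μ (_ : μ ∈ U) => μ (B n)) (m n) (hmU n)) hsup
  -- bound m n D
  have hDG : D ⊆ G (n + 1) := iInter_subset G (n + 1)
  have hre : ∀ k, ε / 2 ^ (n + 1 + k) = ε * 2⁻¹ ^ (n + 1) * 2⁻¹ ^ k := by
    intro k
    rw [div_eq_mul_inv, ENNReal.inv_pow, pow_add, ← mul_assoc]
  have hsum : ∑' k : ℕ, (ε * 2⁻¹ ^ (n + 1) * 2⁻¹ ^ k) = ε * 2⁻¹ ^ n := by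
    rw [ENNReal.tsum_mul_left, ENNReal.tsum_geometric, ENNReal.one_sub_inv_two, inv_inv]
    calc ε * 2⁻¹ ^ (n + 1) * 2 = ε * 2⁻¹ ^ n * (2⁻¹ * 2) := by ring
      _ = ε * 2⁻¹ ^ n := by
          rw [ENNReal.inv_mul_cancel two_ne_zero ENNReal.ofNat_ne_top, mul_one]
  have hmD : m n D ≤ ε * 2⁻¹ ^ n := by
    refine le_trans (measure_mono hDG) ?_
    refine le_trans (measure_iUnion_le _) ?_
    refine le_trans (ENNReal.tsum_le_tsum fun k =>
      (hsmall n (n + 1 + k) (by omega)).trans_eq (hre k)) hsum.le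
  have hmD2 : m n D ≤ ε / 2 := by
    refine le_trans hmD ?_
    have hp : (2⁻¹ : ℝ≥0∞) ^ n ≤ 2⁻¹ := by
      calc (2⁻¹ : ℝ≥0∞) ^ n ≤ 2⁻¹ ^ 1 :=
            pow_le_pow_of_le_one zero_le (by norm_num) (le_max_right N₀ 1)
        _ = 2⁻¹ := pow_one _
    calc ε * 2⁻¹ ^ n ≤ ε * 2⁻¹ := mul_le_mul_right hp ε
      _ = ε / 2 := (div_eq_mul_inv ε 2).symm
  -- final contradiction
  have hAsub : A n ⊆ B n ∪ D := by
    have : A n ⊆ G n := by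
      have : A n = A (n + 0) := by rw [Nat.add_zero]
      rw [this]
      exact subset_iUnion (fun k => A (n + k)) 0
    intro x hx
    by_cases hxd : x ∈ D
    · exact Or.inr hxd
    · exact Or.inl ⟨this hx, hxd⟩
  have : ε < ε := by
    calc ε < m n (A n) := hmA n
      _ ≤ m n (B n ∪ D) := measure_mono hAsub
      _ ≤ m n (B n) + m n D := measure_union_le _ _
      _ < ε / 2 + ε / 2 := ENNReal.add_lt_add_of_lt_of_le
            (hmD2.trans_lt (ENNReal.div_lt_top hεtop two_ne_zero)).ne hmBn hmD2
      _ = ε := ENNReal.add_halves ε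
  exact absurd this (lt_irrefl ε)
end

section
/- Let U be a family of probability measures on X whose envelope μ_U is continuous from above at the empty set. Then there exist a probability measure μ₀ on X and a non-decreasing function ρ : [0,1] → ℝ≥0 with ρ(t) → 0 as t → 0, such that μ(A) ≤ ρ(μ₀(A)) for every μ ∈ U and every measurable set A. (In particular, every μ ∈ U is absolutely continuous with respect to μ₀.) -/
open MeasureTheory Set Filter ENNReal

/-- Intermediate step: for each `ε > 0` there is a finite measure `ν` dominating the
envelope up to `ε`. -/
lemma stmt5_aux {X : Type*} [MeasurableSpace X] (U : Set (Measure X)) (hU : U.Nonempty)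
    (hprob : ∀ μ ∈ U, IsProbabilityMeasure μ)
    (hcont : ∀ A : ℕ → Set X, (∀ n, MeasurableSet (A n)) → Antitone A → (⋂ n, A n) = ∅ →
      Tendsto (fun n => ⨆ μ ∈ U, μ (A n)) atTop (nhds 0))
    (ε : ℝ≥0∞) (hε : 0 < ε) :
    ∃ ν : Measure X, IsFiniteMeasure ν ∧ ∀ A : Set X, MeasurableSet A → ∀ μ ∈ U, μ A ≤ ε + ν A := by
  classical
  obtain ⟨μstart, hμstart⟩ := hU
  haveI : IsProbabilityMeasure μstart := hprob _ hμstart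
  by_contra hcon
  push_neg at hcon
  -- a choice function
  have hpick : ∀ νm : Measure X, IsFiniteMeasure νm → ∃ p : Measure X × Set X,
      p.1 ∈ U ∧ MeasurableSet p.2 ∧ ε + νm p.2 < p.1 p.2 := by
    intro νm hν
    obtain ⟨A, hA, μ, hμU, hlt⟩ := hcon νm hν
    exact ⟨(μ, A), hμU, hA, hlt⟩
  let pick : Measure X → Measure X × Set X := fun νm =>
    if hν : IsFiniteMeasure νm then (hpick νm hν).choose else (μstart, ∅)
  have hpick' : ∀ νm : Measure X, IsFiniteMeasure νm →
      (pick νm).1 ∈ U ∧ MeasurableSet (pick νm).2 ∧ ε + νm (pick νm).2 < (pick νm).1 (pick νm).2 := by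
    intro νm hν
    simp only [pick, dif_pos hν]
    exact (hpick νm hν).choose_spec
  -- the recursive construction
  let f : ℕ → Measure X × (Measure X × Set X) := fun n => Nat.rec
    (⟨μstart, pick ((2:ℝ≥0∞)^(0:ℕ) • μstart)⟩ : Measure X × (Measure X × Set X))
    (fun n ih => ⟨ih.1 + ih.2.1, pick ((2:ℝ≥0∞)^(n+1) • (ih.1 + ih.2.1))⟩) n
  let S : ℕ → Measure X := fun n => (f n).1
  let σm : ℕ → Measure X := fun n => (f n).2.1
  let A : ℕ → Set X := fun n => (f n).2.2
  have hS0 : S 0 = μstart := rfl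
  have hSs : ∀ n, S (n+1) = S n + σm n := fun n => rfl
  have hp0 : (σm 0, A 0) = pick ((2:ℝ≥0∞)^(0:ℕ) • S 0) := rfl
  have hps : ∀ n, (σm (n+1), A (n+1)) = pick ((2:ℝ≥0∞)^(n+1) • S (n+1)) := fun n => rfl
  -- main invariant
  have hmain : ∀ n, S n Set.univ ≤ (n:ℝ≥0∞) + 1 ∧ σm n ∈ U ∧ MeasurableSet (A n) ∧
      ε + (2:ℝ≥0∞)^n * S n (A n) < σm n (A n) := by
    intro n
    induction n with
    | zero =>
      have hfin : S 0 Set.univ ≤ ((0:ℕ):ℝ≥0∞) + 1 := by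
        rw [hS0]; simp
      haveI hF : IsFiniteMeasure ((2:ℝ≥0∞)^(0:ℕ) • S 0) := by
        constructor
        rw [Measure.smul_apply, smul_eq_mul]
        calc (2:ℝ≥0∞)^(0:ℕ) * S 0 Set.univ ≤ 2^(0:ℕ) * (((0:ℕ):ℝ≥0∞)+1) :=
              mul_le_mul_right hfin _
          _ < ⊤ := by norm_num
      obtain ⟨h1, h2, h3⟩ := hpick' _ hF
      refine ⟨hfin, ?_, ?_, ?_⟩
      · rw [show σm 0 = (pick ((2:ℝ≥0∞)^(0:ℕ) • S 0)).1 from congrArg Prod.fst hp0]; exact h1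
      · rw [show A 0 = (pick ((2:ℝ≥0∞)^(0:ℕ) • S 0)).2 from congrArg Prod.snd hp0]; exact h2
      · have := h3
        rw [Measure.smul_apply, smul_eq_mul] at this
        rw [show σm 0 = (pick ((2:ℝ≥0∞)^(0:ℕ) • S 0)).1 from congrArg Prod.fst hp0,
            show A 0 = (pick ((2:ℝ≥0∞)^(0:ℕ) • S 0)).2 from congrArg Prod.snd hp0]
        exact this
    | succ n ih =>
      obtain ⟨ihfin, ihU, _, _⟩ := ih
      haveI : IsProbabilityMeasure (σm n) := hprob _ ihU
      have hfin : S (n+1) Set.univ ≤ ((n+1:ℕ):ℝ≥0∞) + 1 := by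
        rw [hSs n]
        rw [Measure.add_apply]
        have : σm n Set.univ = 1 := measure_univ
        rw [this]
        push_cast
        calc S n Set.univ + 1 ≤ ((n:ℝ≥0∞) + 1) + 1 := add_le_add_left ihfin 1
          _ = (n:ℝ≥0∞) + 1 + 1 := rfl
      haveI hF : IsFiniteMeasure ((2:ℝ≥0∞)^(n+1) • S (n+1)) := by
        constructor
        rw [Measure.smul_apply, smul_eq_mul]
        calc (2:ℝ≥0∞)^(n+1) * S (n+1) Set.univ ≤ 2^(n+1) * (((n+1:ℕ):ℝ≥0∞) + 1) :=
              mul_le_mul_right hfin _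
          _ < ⊤ := by
              apply ENNReal.mul_lt_top (ENNReal.pow_lt_top (by norm_num))
              push_cast
              exact ENNReal.add_lt_top.2 ⟨ENNReal.add_lt_top.2
                  ⟨ENNReal.natCast_lt_top n, ENNReal.one_lt_top⟩, ENNReal.one_lt_top⟩
      obtain ⟨h1, h2, h3⟩ := hpick' _ hF
      refine ⟨hfin, ?_, ?_, ?_⟩
      · rw [show σm (n+1) = (pick ((2:ℝ≥0∞)^(n+1) • S (n+1))).1 from congrArg Prod.fst (hps n)]
        exact h1
      · rw [show A (n+1) = (pick ((2:ℝ≥0∞)^(n+1) • S (n+1))).2 from congrArg Prod.snd (hps n)]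
        exact h2
      · have := h3
        rw [Measure.smul_apply, smul_eq_mul] at this
        rw [show σm (n+1) = (pick ((2:ℝ≥0∞)^(n+1) • S (n+1))).1 from congrArg Prod.fst (hps n),
            show A (n+1) = (pick ((2:ℝ≥0∞)^(n+1) • S (n+1))).2 from congrArg Prod.snd (hps n)]
        exact this
  have hσU : ∀ n, σm n ∈ U := fun n => (hmain n).2.1
  have hAmeas : ∀ n, MeasurableSet (A n) := fun n => (hmain n).2.2.1
  have hkey : ∀ n, ε + (2:ℝ≥0∞)^n * S n (A n) < σm n (A n) := fun n => (hmain n).2.2.2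
  -- S is monotone, σm n ≤ S k for n < k
  have hSmono : ∀ n k, n ≤ k → S n ≤ S k := by
    intro n k hnk
    induction k with
    | zero => simp_all
    | succ k ihk =>
      rcases Nat.lt_or_ge n (k+1) with h | h
      · have := ihk (Nat.lt_succ_iff.1 h)
        calc S n ≤ S k := this
          _ ≤ S k + σm k := Measure.le_iff'.2 fun s => by
              rw [Measure.add_apply]; exact le_self_add
          _ = S (k+1) := (hSs k).symm
      · have : n = k + 1 := le_antisymm hnk h
        subst this; exact le_rfl
  have hσS : ∀ n k, n < k → σm n ≤ S k := by
    intro n k hnk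
    have h1 : σm n ≤ S (n+1) := by
      rw [hSs n]; exact Measure.le_iff'.2 fun s => by
        rw [Measure.add_apply]; exact le_add_self
    exact h1.trans (hSmono (n+1) k hnk)
  -- bound on S k (A k)
  have hbound : ∀ k, S k (A k) ≤ (2:ℝ≥0∞)⁻¹ ^ k := by
    intro k
    haveI : IsProbabilityMeasure (σm k) := hprob _ (hσU k)
    have h1 : (2:ℝ≥0∞)^k * S k (A k) ≤ 1 := by
      have h2 : (2:ℝ≥0∞)^k * S k (A k) ≤ ε + (2:ℝ≥0∞)^k * S k (A k) := le_add_self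
      have h3 : σm k (A k) ≤ 1 := prob_le_one
      exact (h2.trans (hkey k).le).trans h3
    have h2 : (2:ℝ≥0∞)⁻¹^k * (2:ℝ≥0∞)^k = 1 := by
      rw [← mul_pow, ENNReal.inv_mul_cancel (by norm_num) (by norm_num), one_pow]
    calc S k (A k) = (2:ℝ≥0∞)⁻¹^k * (2:ℝ≥0∞)^k * S k (A k) := by rw [h2, one_mul]
      _ = (2:ℝ≥0∞)⁻¹^k * ((2:ℝ≥0∞)^k * S k (A k)) := mul_assoc _ _ _
      _ ≤ (2:ℝ≥0∞)⁻¹^k * 1 := mul_le_mul_right h1 _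
      _ = (2:ℝ≥0∞)⁻¹^k := mul_one _
  have hσA : ∀ n k, n < k → σm n (A k) ≤ (2:ℝ≥0∞)⁻¹ ^ k := by
    intro n k h
    exact le_trans (hσS n k h (A k)) (hbound k)
  -- the decreasing sets
  set B : ℕ → Set X := fun m => ⋃ k, A (m + k) with hB
  have hBmeas : ∀ m, MeasurableSet (B m) := fun m => MeasurableSet.iUnion fun k => hAmeas _
  have hBanti : Antitone B := by
    intro m m' h
    refine Set.iUnion_subset fun k => ?_
    have e : m' + k = m + (m' - m + k) := by omega
    rw [e]
    exact Set.subset_iUnion (fun j => A (m + j)) _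
  set L : Set X := ⋂ m, B m with hL
  have hLmeas : MeasurableSet L := MeasurableSet.iInter fun m => hBmeas m
  have hσL : ∀ n, σm n L = 0 := by
    intro n
    have hbd : ∀ m, n < m → σm n L ≤ (2:ℝ≥0∞)⁻¹^m * 2 := by
      intro m hm
      calc σm n L ≤ σm n (B m) := measure_mono (Set.iInter_subset _ m)
        _ ≤ ∑' k, σm n (A (m + k)) := measure_iUnion_le _
        _ ≤ ∑' k, (2:ℝ≥0∞)⁻¹^(m+k) := ENNReal.tsum_le_tsum fun k => hσA n (m+k) (by omega)
        _ = (2:ℝ≥0∞)⁻¹^m * ∑' k, (2:ℝ≥0∞)⁻¹^k := by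
            simp_rw [pow_add]; rw [ENNReal.tsum_mul_left]
        _ = (2:ℝ≥0∞)⁻¹^m * 2 := by
            rw [ENNReal.tsum_geometric, ENNReal.one_sub_inv_two]
            simp
    have htend : Tendsto (fun m => (2:ℝ≥0∞)⁻¹^m * 2) atTop (nhds 0) := by
      have h1 : Tendsto (fun m => (2:ℝ≥0∞)⁻¹^m) atTop (nhds 0) :=
        ENNReal.tendsto_pow_atTop_nhds_zero_of_lt_one (by norm_num)
      have := ENNReal.Tendsto.mul_const h1 (Or.inr (by norm_num : (2:ℝ≥0∞) ≠ ⊤))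
      simpa using this
    have : σm n L ≤ 0 := ge_of_tendsto htend (eventually_atTop.2 ⟨n+1, fun m hm => hbd m (by omega)⟩)
    exact le_antisymm this zero_le
  -- the contradiction sets
  set C : ℕ → Set X := fun m => B m \ L with hC
  have hCmeas : ∀ m, MeasurableSet (C m) := fun m => (hBmeas m).diff hLmeas
  have hCanti : Antitone C := fun m m' h => Set.diff_subset_diff_left (hBanti h)
  have hCempty : (⋂ m, C m) = ∅ := by
    ext x
    simp only [hC, Set.mem_iInter, Set.mem_diff, Set.mem_empty_iff_false, iff_false]
    intro hx
    exact (hx 0).2 (by rw [hL]; exact Set.mem_iInter.2 fun m => (hx m).1)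
  have htend := hcont C hCmeas hCanti hCempty
  have hev : ∀ᶠ m in atTop, (⨆ μ ∈ U, μ (C m)) < ε := htend.eventually_lt_const hε
  obtain ⟨m, hm⟩ := hev.exists
  -- but ⨆ μ ∈ U, μ (C m) > ε
  have hAm : A m ⊆ B m := by
    have : A (m + 0) ⊆ B m := Set.subset_iUnion (fun k => A (m + k)) 0
    simpa using this
  have h1 : ε < σm m (A m) := lt_of_le_of_lt le_self_add (hkey m)
  have h2 : σm m (A m) ≤ σm m (C m) := by
    calc σm m (A m) ≤ σm m ((A m \ L) ∪ L) := measure_mono (by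
          intro x hx
          by_cases hxL : x ∈ L
          · exact Or.inr hxL
          · exact Or.inl ⟨hx, hxL⟩)
      _ ≤ σm m (A m \ L) + σm m L := measure_union_le _ _
      _ = σm m (A m \ L) := by rw [hσL m, add_zero]
      _ ≤ σm m (C m) := measure_mono (Set.diff_subset_diff_left hAm)
  have h3 : σm m (C m) ≤ ⨆ μ ∈ U, μ (C m) := le_biSup (fun μ => μ (C m)) (hσU m)
  exact absurd ((h1.trans_le h2).trans_le h3) (not_lt.2 hm.le)

theorem stmt5 {X : Type*} [MeasurableSpace X] (U : Set (Measure X)) (hU : U.Nonempty)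
    (hprob : ∀ μ ∈ U, IsProbabilityMeasure μ)
    (hcont : ∀ A : ℕ → Set X, (∀ n, MeasurableSet (A n)) → Antitone A → (⋂ n, A n) = ∅ →
      Tendsto (fun n => ⨆ μ ∈ U, μ (A n)) atTop (nhds 0)) :
    ∃ (μ₀ : Measure X) (ρ : ℝ≥0∞ → ℝ≥0∞), IsProbabilityMeasure μ₀ ∧ Monotone ρ ∧
      Tendsto ρ (nhdsWithin 0 (Set.Ioi 0)) (nhds 0) ∧
      ∀ μ ∈ U, ∀ A : Set X, MeasurableSet A → μ A ≤ ρ (μ₀ A) := by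
  classical
  obtain ⟨μ₁, hμ₁⟩ := hU
  haveI : IsProbabilityMeasure μ₁ := hprob _ hμ₁
  choose ν hνfin hνle using fun k : ℕ =>
    stmt5_aux U ⟨μ₁, hμ₁⟩ hprob hcont ((2:ℝ≥0∞)⁻¹ ^ k) (ENNReal.pow_pos (by norm_num) k)
  have hνtop : ∀ k, ν k Set.univ ≠ ⊤ := fun k => (hνfin k).measure_univ_lt_top.ne
  set w : ℕ → ℝ≥0∞ := fun k => (2:ℝ≥0∞)⁻¹^(k+1) * (ν k Set.univ + 1)⁻¹ with hwdef
  have hwtop : ∀ k, w k ≠ ⊤ := by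
    intro k
    apply ENNReal.mul_ne_top
    · exact (ENNReal.pow_lt_top (by norm_num)).ne
    · exact ENNReal.inv_ne_top.2 (by simp)
  have hw0 : ∀ k, w k ≠ 0 := by
    intro k
    apply mul_ne_zero
    · exact (ENNReal.pow_pos (by norm_num) _).ne'
    · exact ENNReal.inv_ne_zero.2 (ENNReal.add_ne_top.2 ⟨hνtop k, ENNReal.one_ne_top⟩)
  have hwle : ∀ k, w k ≤ (2:ℝ≥0∞)⁻¹^(k+1) := by
    intro k
    calc w k ≤ (2:ℝ≥0∞)⁻¹^(k+1) * 1 := mul_le_mul_right (ENNReal.inv_le_one.2 le_add_self) _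
      _ = (2:ℝ≥0∞)⁻¹^(k+1) := mul_one _
  set μsum : Measure X := Measure.sum (fun k => w k • ν k) with hμsum
  set μ' : Measure X := μ₁ + μsum with hμ'
  set T : ℝ≥0∞ := μ' Set.univ with hT
  have hμ'univ : T = 1 + μsum Set.univ := by
    rw [hT, hμ', Measure.add_apply, measure_univ]
  have hsumuniv : μsum Set.univ ≤ 1 := by
    rw [hμsum, Measure.sum_apply _ MeasurableSet.univ]
    calc ∑' k, (w k • ν k) Set.univ = ∑' k, w k * ν k Set.univ := by
          simp [Measure.smul_apply, smul_eq_mul]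
      _ ≤ ∑' k, (2:ℝ≥0∞)⁻¹^(k+1) * 1 := by
          refine ENNReal.tsum_le_tsum fun k => ?_
          rw [hwdef]
          rw [mul_assoc]
          refine mul_le_mul_right ?_ _
          calc (ν k Set.univ + 1)⁻¹ * ν k Set.univ
              ≤ (ν k Set.univ + 1)⁻¹ * (ν k Set.univ + 1) := mul_le_mul_right le_self_add _
            _ = 1 := ENNReal.inv_mul_cancel (by simp)
                (ENNReal.add_ne_top.2 ⟨hνtop k, ENNReal.one_ne_top⟩)
      _ = ∑' k, (2:ℝ≥0∞)⁻¹^k * 2⁻¹ := by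
          congr 1; funext k; rw [mul_one, pow_succ]
      _ = 2 * 2⁻¹ := by
          rw [ENNReal.tsum_mul_right, ENNReal.tsum_geometric, ENNReal.one_sub_inv_two]
          congr 1
          simp
      _ = 1 := ENNReal.mul_inv_cancel (by norm_num) (by norm_num)
  have hT1 : 1 ≤ T := by rw [hμ'univ]; exact le_self_add
  have hT2 : T ≤ 2 := by
    rw [hμ'univ]
    calc (1:ℝ≥0∞) + μsum Set.univ ≤ 1 + 1 := add_le_add_right hsumuniv _
      _ = 2 := one_add_one_eq_two
  have hT0 : T ≠ 0 := by intro h; rw [h] at hT1; simp at hT1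
  have hTtop : T ≠ ⊤ := (hT2.trans_lt (by norm_num)).ne
  refine ⟨T⁻¹ • μ', fun t => ⨅ k : ℕ, ((2:ℝ≥0∞)⁻¹^k + ((T⁻¹ * w k)⁻¹) * t), ?_, ?_, ?_, ?_⟩
  · constructor
    rw [Measure.smul_apply, smul_eq_mul, ← hT]
    exact ENNReal.inv_mul_cancel hT0 hTtop
  · intro s t hst
    exact le_iInf fun k => (iInf_le _ k).trans (add_le_add_right (mul_le_mul_right hst _) _)
  · have hc0 : ∀ k, (T⁻¹ * w k)⁻¹ ≠ 0 := fun k =>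
      ENNReal.inv_ne_zero.2 (ENNReal.mul_ne_top (ENNReal.inv_ne_top.2 hT0) (hwtop k))
    have hctop : ∀ k, (T⁻¹ * w k)⁻¹ ≠ ⊤ := fun k =>
      ENNReal.inv_ne_top.2 (mul_ne_zero (ENNReal.inv_ne_zero.2 hTtop) (hw0 k))
    rw [ENNReal.tendsto_nhds_zero]
    intro ε hε
    obtain ⟨k, hk⟩ := ENNReal.exists_inv_two_pow_lt (ENNReal.half_pos hε.ne').ne'
    have hδ : 0 < ε/2 * ((T⁻¹ * w k)⁻¹)⁻¹ :=
      ENNReal.mul_pos (ENNReal.half_pos hε.ne').ne' (ENNReal.inv_ne_zero.2 (hctop k))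
    filter_upwards [Ioc_mem_nhdsGT_of_mem ⟨le_refl (0:ℝ≥0∞), hδ⟩] with t ht
    calc (⨅ j : ℕ, ((2:ℝ≥0∞)⁻¹^j + ((T⁻¹ * w j)⁻¹) * t))
        ≤ (2:ℝ≥0∞)⁻¹^k + ((T⁻¹ * w k)⁻¹) * t := iInf_le _ k
      _ ≤ ε/2 + ε/2 := by
          refine add_le_add hk.le ?_
          calc (T⁻¹ * w k)⁻¹ * t ≤ (T⁻¹ * w k)⁻¹ * (ε/2 * ((T⁻¹ * w k)⁻¹)⁻¹) :=
                mul_le_mul_right ht.2 _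
            _ = ((T⁻¹ * w k)⁻¹ * ((T⁻¹ * w k)⁻¹)⁻¹) * (ε/2) := by ring
            _ = 1 * (ε/2) := by rw [ENNReal.mul_inv_cancel (hc0 k) (hctop k)]
            _ = ε/2 := one_mul _
      _ = ε := ENNReal.add_halves ε
  · intro μ hμ A hA
    refine le_iInf fun k => ?_
    refine (hνle k A hA μ hμ).trans (add_le_add_right ?_ _)
    have h1 : (T⁻¹ * w k) * ν k A ≤ (T⁻¹ • μ') A := by
      rw [Measure.smul_apply, smul_eq_mul]
      rw [mul_assoc]
      refine mul_le_mul_right ?_ _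
      calc w k * ν k A = (w k • ν k) A := by rw [Measure.smul_apply, smul_eq_mul]
        _ ≤ μsum A := Measure.le_iff'.1 (Measure.le_sum (fun j => w j • ν j) k) A
        _ ≤ μ' A := by rw [hμ', Measure.add_apply]; exact le_add_self
    calc ν k A = ((T⁻¹ * w k)⁻¹ * (T⁻¹ * w k)) * ν k A := by
          rw [ENNReal.inv_mul_cancel
            (mul_ne_zero (ENNReal.inv_ne_zero.2 hTtop) (hw0 k))
            (ENNReal.mul_ne_top (ENNReal.inv_ne_top.2 hT0) (hwtop k)), one_mul]
      _ = (T⁻¹ * w k)⁻¹ * ((T⁻¹ * w k) * ν k A) := mul_assoc _ _ _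
      _ ≤ (T⁻¹ * w k)⁻¹ * (T⁻¹ • μ') A := mul_le_mul_right h1 _
end

section
/- Let U be a family of probability measures on X and ε ∈ (0,1] such that the ε-fragmentation number N := N_U(ε) is finite and positive. Then there exists a probability measure μ_ε on X such that for every measurable set A, if μ_ε(A) ≤ ε/N², then sup_{μ∈U} μ(A) ≤ 2ε. -/
open MeasureTheory Set Filter ENNReal

/-- Auxiliary "stable level" lemma: if there are `M+1` disjoint sets whose sup-measure
exceeds `η + (M+1)*c`, but no `M+2` disjoint sets whose sup-measure exceeds `η`,
then the uniform mixture of near-witnessing measures works. -/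
lemma stmt6_stable {X : Type*} [MeasurableSpace X] (U : Set (Measure X))
    (hprob : ∀ μ ∈ U, IsProbabilityMeasure μ)
    (ε η c : ℝ≥0∞) (hη2 : η ≤ 2 * ε) (M : ℕ)
    (hKtop : ((M : ℝ≥0∞) + 1) * c ≠ ∞)
    (hQ : ∃ B : Fin (M + 1) → Set X, (∀ i, MeasurableSet (B i)) ∧ Pairwise (Function.onFun Disjoint B) ∧
      ∀ i, η + ((M : ℝ≥0∞) + 1) * c < ⨆ μ ∈ U, μ (B i))
    (hnot : ¬ ∃ B : Fin (M + 2) → Set X, (∀ i, MeasurableSet (B i)) ∧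
      Pairwise (Function.onFun Disjoint B) ∧ ∀ i, η < ⨆ μ ∈ U, μ (B i)) :
    ∃ μe : Measure X, IsProbabilityMeasure μe ∧
      ∀ A : Set X, MeasurableSet A → μe A ≤ c → (⨆ μ ∈ U, μ A) ≤ 2 * ε := by
  obtain ⟨B, hBm, hBd, hBs⟩ := hQ
  set K : ℝ≥0∞ := ((M : ℝ≥0∞) + 1) * c with hK
  have hMne : ((M : ℝ≥0∞) + 1) ≠ 0 := by simp
  have hMtop : ((M : ℝ≥0∞) + 1) ≠ ∞ := by simp
  have hν : ∀ i : Fin (M + 1), ∃ ν, ν ∈ U ∧ η + K < ν (B i) := by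
    intro i
    have h := hBs i
    rw [lt_iSup_iff] at h
    obtain ⟨ν, hν⟩ := h
    rw [lt_iSup_iff] at hν
    obtain ⟨hνU, hνlt⟩ := hν
    exact ⟨ν, hνU, hνlt⟩
  choose ν hνU hνB using hν
  have hνprob : ∀ i, IsProbabilityMeasure (ν i) := fun i => hprob _ (hνU i)
  refine ⟨((M : ℝ≥0∞) + 1)⁻¹ • ∑ i : Fin (M + 1), ν i, ?_, ?_⟩
  · constructor
    rw [Measure.smul_apply, smul_eq_mul, Measure.finset_sum_apply]
    have : ∀ i ∈ Finset.univ (α := Fin (M + 1)), ν i Set.univ = 1 := by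
      intro i _; exact (hνprob i).measure_univ
    rw [Finset.sum_congr rfl this]
    simp only [Finset.sum_const, Finset.card_univ, Fintype.card_fin, nsmul_eq_mul, mul_one]
    push_cast
    exact ENNReal.inv_mul_cancel hMne hMtop
  · intro A hAmeas hAsmall
    by_contra hcon
    push_neg at hcon
    obtain ⟨μ, hμU, hμA⟩ : ∃ μ, μ ∈ U ∧ 2 * ε < μ A := by
      rw [lt_iSup_iff] at hcon
      obtain ⟨μ, hμ⟩ := hcon
      rw [lt_iSup_iff] at hμ
      exact ⟨μ, hμ.1, hμ.2⟩
    -- each ν i gives small measure to A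
    have hνA : ∀ i, ν i A ≤ K := by
      intro i
      have h1 : ν i A ≤ ∑ j : Fin (M + 1), ν j A :=
        Finset.single_le_sum (f := fun j => ν j A) (fun j _ => zero_le) (Finset.mem_univ i)
      have h2 : (((M : ℝ≥0∞) + 1)⁻¹ • ∑ i : Fin (M + 1), ν i) A
          = ((M : ℝ≥0∞) + 1)⁻¹ * ∑ j : Fin (M + 1), ν j A := by
        rw [Measure.smul_apply, smul_eq_mul, Measure.finset_sum_apply]
      have h3 : ∑ j : Fin (M + 1), ν j A ≤ ((M : ℝ≥0∞) + 1) * c := by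
        have := hAsmall
        rw [h2] at this
        calc ∑ j : Fin (M + 1), ν j A
            = ((M : ℝ≥0∞) + 1) * (((M : ℝ≥0∞) + 1)⁻¹ * ∑ j : Fin (M + 1), ν j A) := by
              rw [← mul_assoc, ENNReal.mul_inv_cancel hMne hMtop, one_mul]
          _ ≤ ((M : ℝ≥0∞) + 1) * c := mul_le_mul_right this _
      exact h1.trans h3
    apply hnot
    refine ⟨Fin.cases A (fun j => B j \ A), ?_, ?_, ?_⟩
    · intro i
      refine Fin.cases ?_ ?_ i
      · exact hAmeas
      · intro j; exact (hBm j).diff hAmeas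
    · intro i j hij
      rcases Fin.eq_zero_or_eq_succ i with rfl | ⟨i', rfl⟩ <;>
        rcases Fin.eq_zero_or_eq_succ j with rfl | ⟨j', rfl⟩
      · exact absurd rfl hij
      · simpa [Function.onFun] using (disjoint_sdiff_self_right (x := A) (y := B j'))
      · simpa [Function.onFun] using (disjoint_sdiff_self_right (x := A) (y := B i')).symm
      · have hne : i' ≠ j' := fun h => hij (by rw [h])
        have := hBd hne
        simp only [Function.onFun, Fin.cases_succ]
        exact Disjoint.mono diff_subset diff_subset this
    · intro i
      refine Fin.cases ?_ ?_ i
      · simp only [Fin.cases_zero]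
        have hle : μ A ≤ ⨆ μ ∈ U, μ A := le_biSup (fun μ : Measure X => μ A) hμU
        exact lt_of_le_of_lt hη2 (lt_of_lt_of_le hμA hle)
      · intro j
        simp only [Fin.cases_succ]
        have hsplit : ν j (B j \ A) + ν j (B j ∩ A) = ν j (B j) :=
          measure_diff_add_inter _ hAmeas
        have h4 : ν j (B j) ≤ ν j (B j \ A) + K := by
          rw [← hsplit]
          exact add_le_add le_rfl ((measure_mono inter_subset_right).trans (hνA j))
        have h5 : η + K < ν j (B j \ A) + K := lt_of_lt_of_le (hνB j) h4
        have h6 : η < ν j (B j \ A) := (ENNReal.add_lt_add_iff_right hKtop).mp h5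
        exact lt_of_lt_of_le h6 (le_biSup (fun μ : Measure X => μ (B j \ A)) (hνU j))

theorem stmt6 {X : Type*} [MeasurableSpace X] (U : Set (Measure X)) (hU : U.Nonempty)
    (hprob : ∀ μ ∈ U, IsProbabilityMeasure μ)
    (ε : ℝ≥0∞) (hε : 0 < ε) (hε1 : ε ≤ 1) (N : ℕ) (hN : 0 < N)
    (hex : ∃ B : Fin N → Set X, (∀ i, MeasurableSet (B i)) ∧ Pairwise (Function.onFun Disjoint B) ∧
      ∀ i, ε ≤ ⨆ μ ∈ U, μ (B i))
    (hmax : ¬ ∃ B : Fin (N + 1) → Set X, (∀ i, MeasurableSet (B i)) ∧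
      Pairwise (Function.onFun Disjoint B) ∧ ∀ i, ε ≤ ⨆ μ ∈ U, μ (B i)) :
    ∃ μe : Measure X, IsProbabilityMeasure μe ∧
      ∀ A : Set X, MeasurableSet A → μe A ≤ ε / (N : ℝ≥0∞) ^ 2 →
        (⨆ μ ∈ U, μ A) ≤ 2 * ε := by
  have hεtop : ε ≠ ∞ := (hε1.trans_lt (by norm_num)).ne
  have hN0 : ((N : ℝ≥0∞)) ≠ 0 := by exact_mod_cast Nat.cast_ne_zero.mpr hN.ne'
  have hNtop : ((N : ℝ≥0∞)) ≠ ∞ := by simp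
  set c : ℝ≥0∞ := ε / (N : ℝ≥0∞) ^ 2 with hc
  have hctop : c ≠ ∞ := by
    rw [hc]
    exact (ENNReal.div_lt_top hεtop (by positivity)).ne
  -- the descending level function
  set S : ℕ → ℕ := fun M => ∑ j ∈ Finset.Ico M N, (j + 1) with hS
  set ηf : ℕ → ℝ≥0∞ := fun M => ε + (S M : ℝ≥0∞) * c with hηf
  have hSbound : ∀ M, S M ≤ N ^ 2 := by
    intro M
    have h1 : S M ≤ (Finset.Ico M N).card • N := by
      apply Finset.sum_le_card_nsmul
      intro x hx
      have := (Finset.mem_Ico.mp hx).2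
      omega
    have h2 : (Finset.Ico M N).card • N ≤ N * N := by
      rw [smul_eq_mul, Nat.card_Ico]
      exact Nat.mul_le_mul_right _ (Nat.sub_le _ _)
    calc S M ≤ (Finset.Ico M N).card • N := h1
      _ ≤ N * N := h2
      _ = N ^ 2 := (sq N).symm
  have hη2 : ∀ M, ηf M ≤ 2 * ε := by
    intro M
    have h1 : (S M : ℝ≥0∞) * c ≤ ((N : ℝ≥0∞) ^ 2) * c := by
      apply mul_le_mul_left
      exact_mod_cast Nat.cast_le.mpr (hSbound M)
    have h2 : ((N : ℝ≥0∞) ^ 2) * c = ε := by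
      rw [hc, ENNReal.mul_div_cancel (by positivity) (by simp)]
    calc ηf M = ε + (S M : ℝ≥0∞) * c := rfl
      _ ≤ ε + ε := add_le_add le_rfl (h1.trans_eq h2)
      _ = 2 * ε := (two_mul ε).symm
  have hrec : ∀ m : ℕ, m < N → ηf m = ηf (m + 1) + ((m : ℝ≥0∞) + 1) * c := by
    intro m hm
    have hSm : S m = (m + 1) + S (m + 1) := by
      rw [hS]
      exact Finset.sum_eq_sum_Ico_succ_bot hm _
    rw [hηf]
    simp only
    rw [hSm]
    push_cast
    ring
  have hηN : ηf N = ε := by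
    rw [hηf]; simp [hS]
  have hKtop : ∀ m : ℕ, ((m : ℝ≥0∞) + 1) * c ≠ ∞ :=
    fun m => ENNReal.mul_ne_top (by simp) hctop
  -- descent
  have key : ∀ M : ℕ, M ≤ N →
      (¬ ∃ B : Fin (M + 1) → Set X, (∀ i, MeasurableSet (B i)) ∧
        Pairwise (Function.onFun Disjoint B) ∧ ∀ i, ηf M < ⨆ μ ∈ U, μ (B i)) →
      ∃ μe : Measure X, IsProbabilityMeasure μe ∧
        ∀ A : Set X, MeasurableSet A → μe A ≤ c → (⨆ μ ∈ U, μ A) ≤ 2 * ε := by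
    intro M
    induction M with
    | zero =>
      intro _ hnot
      obtain ⟨μ0, hμ0⟩ := hU
      refine ⟨μ0, hprob _ hμ0, ?_⟩
      intro A hAmeas _
      by_contra hcon
      push_neg at hcon
      apply hnot
      refine ⟨fun _ => A, fun _ => hAmeas, fun i j hij => absurd ?_ hij, fun _ => ?_⟩
      · have hi := i.isLt; have hj := j.isLt
        exact Fin.ext (by omega)
      · exact lt_of_le_of_lt (hη2 0) hcon
    | succ m ih =>
      intro hle hnot
      by_cases hQ : ∃ B : Fin (m + 1) → Set X, (∀ i, MeasurableSet (B i)) ∧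
          Pairwise (Function.onFun Disjoint B) ∧ ∀ i, ηf m < ⨆ μ ∈ U, μ (B i)
      · -- stable case
        have hm : m < N := hle
        have hQ' : ∃ B : Fin (m + 1) → Set X, (∀ i, MeasurableSet (B i)) ∧
            Pairwise (Function.onFun Disjoint B) ∧
            ∀ i, ηf (m + 1) + ((m : ℝ≥0∞) + 1) * c < ⨆ μ ∈ U, μ (B i) := by
          obtain ⟨B, h1, h2, h3⟩ := hQ
          exact ⟨B, h1, h2, fun i => by rw [← hrec m hm]; exact h3 i⟩
        exact stmt6_stable U hprob ε (ηf (m + 1)) c (hη2 (m + 1)) m (hKtop m) hQ' hnot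
      · exact ih (Nat.le_of_succ_le hle) hQ
  apply key N le_rfl
  intro hQ
  apply hmax
  obtain ⟨B, h1, h2, h3⟩ := hQ
  exact ⟨B, h1, h2, fun i => le_of_lt (by rw [← hηN]; exact h3 i)⟩
end

section
/- Let μ₀ be a probability measure and μ a probability measure with μ ≪ μ₀, and suppose ρ : (0,1] → ℝ≥0 satisfies: μ(A) ≤ ρ(μ₀(A)) for all measurable A with μ₀(A) > 0, ρ is non-decreasing, and t ↦ ρ(t)/t is non-increasing. Fix ε ∈ (0,1] with ρ(ε) > 0 and let η := ρ(ε)/ε. Then the set A := { x : dμ/dμ₀(x) > η } satisfies μ₀(A) ≤ ε and μ(A) ≤ ρ(ε). -/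
open MeasureTheory Set Filter ENNReal

theorem stmt10 {X : Type*} [MeasurableSpace X] (μ₀ μ : Measure X)
    [IsProbabilityMeasure μ₀] [IsProbabilityMeasure μ] (hac : μ ≪ μ₀)
    (ρ : ℝ≥0∞ → ℝ≥0∞)
    (hsm : ∀ A : Set X, MeasurableSet A → 0 < μ₀ A → μ A ≤ ρ (μ₀ A))
    (hmono : Monotone ρ)
    (hratio : ∀ s t : ℝ≥0∞, 0 < s → s ≤ t → t ≤ 1 → ρ t / t ≤ ρ s / s)
    (ε : ℝ≥0∞) (hε : 0 < ε) (hε1 : ε ≤ 1) (hρε : 0 < ρ ε) :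
    μ₀ {x | ρ ε / ε < μ.rnDeriv μ₀ x} ≤ ε ∧
    μ {x | ρ ε / ε < μ.rnDeriv μ₀ x} ≤ ρ ε := by
  set η := ρ ε / ε with hη
  set f := μ.rnDeriv μ₀ with hf
  set A := {x | η < f x} with hAdef
  have hfm : Measurable f := Measure.measurable_rnDeriv μ μ₀
  have hA : MeasurableSet A := measurableSet_lt measurable_const hfm
  by_cases htop : ρ ε = ∞
  · have hηtop : η = ∞ := by
      rw [hη, htop, ENNReal.top_div]
      simp [(hε.trans_le hε1).trans_le le_top |>.ne, (hε1.trans_lt ENNReal.one_lt_top).ne]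
    have : A = ∅ := by
      ext x; simp [hAdef, hηtop]
    rw [this]
    simp [hε.le]
  · have hηlt : η < ∞ := ENNReal.div_lt_top htop hε.ne'
    -- key: μ₀ A ≤ ε
    have hge : η * μ₀ A ≤ μ A := by
      have h1 : μ A = ∫⁻ x in A, f x ∂μ₀ := (Measure.setLIntegral_rnDeriv hac A).symm
      have h2 : ∫⁻ x in A, η ∂μ₀ ≤ ∫⁻ x in A, f x ∂μ₀ :=
        setLIntegral_mono' hA fun x hx => (hx : η < f x).le
      rw [setLIntegral_const] at h2
      rw [h1]
      exact h2
    have hμ₀A : μ₀ A ≤ ε := by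
      by_contra h
      push_neg at h
      have h0 : 0 < μ₀ A := hε.trans h
      have h1 : μ₀ A ≤ 1 := prob_le_one
      have hfin : μ₀ A ≠ ∞ := (h1.trans_lt ENNReal.one_lt_top).ne
      have hr : ρ (μ₀ A) / μ₀ A ≤ η := hratio ε (μ₀ A) hε h.le h1
      have hle2 : ρ (μ₀ A) ≤ η * μ₀ A := by
        rw [ENNReal.div_le_iff h0.ne' hfin] at hr
        exact hr
      have hle : μ A ≤ η * μ₀ A := (hsm A hA h0).trans hle2
      have heq : μ A = η * μ₀ A := le_antisymm hle hge
      -- derive contradiction: f > η on A but ∫ f = ∫ η over A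
      have hμAeq : ∫⁻ x in A, f x ∂μ₀ = η * μ₀ A := by
        rw [Measure.setLIntegral_rnDeriv hac A]
        exact heq
      have hconst : ∫⁻ _x in A, η ∂μ₀ = η * μ₀ A := by
        rw [setLIntegral_const]
      have hsub : ∫⁻ x in A, (f x - η) ∂μ₀ = 0 := by
        rw [lintegral_sub measurable_const
          (by rw [hconst]; exact ENNReal.mul_ne_top hηlt.ne hfin)
          ((ae_restrict_iff' hA).2 (ae_of_all _ fun x hx => (hx : η < f x).le)),
          hμAeq, hconst, tsub_self]
      have h3 := ((lintegral_eq_zero_iff (hfm.sub measurable_const)).1 hsub).and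
        (ae_restrict_mem hA)
      have hfalse : ∀ᵐ x ∂μ₀.restrict A, False :=
        h3.mono fun x ⟨hx0, hxA⟩ => (LE.le.not_gt (tsub_eq_zero_iff_le.mp hx0) hxA)
      have hA0 : μ₀ A = 0 := by
        rw [← Measure.restrict_eq_zero, ← ae_eq_bot]
        exact Filter.eventually_false_iff_eq_bot.mp hfalse
      exact absurd hA0 h0.ne'
    refine ⟨hμ₀A, ?_⟩
    rcases eq_or_lt_of_le (zero_le : 0 ≤ μ₀ A) with h0 | h0
    · have : μ A = 0 := hac h0.symm
      simp [this]
    · exact (hsm A hA h0).trans (hmono hμ₀A)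
end

section
/- Let U be a family of probability measures on X, ε, δ ∈ (0,1], and N ≥ 1 an integer such that there exist N pairwise disjoint measurable sets B_1,…,B_N with sup_{μ∈U} μ(B_i) ≥ ε for each i. Then there exist k ≥ Nδ/2 pairwise disjoint measurable sets A_1,…,A_k and measures μ_1,…,μ_k ∈ U such that μ_i(A_i) ≥ ε for all i, and μ_i(A_j) ≤ δ for all distinct i, j. -/
open MeasureTheory Set Filter ENNReal

private lemma nat_amgm (x y : ℕ) : 2 * x * y ≤ x ^ 2 + y ^ 2 := by
  zify
  nlinarith [sq_nonneg ((x : ℤ) - y)]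

open Finset in
private lemma caroWeiAux {ι : Type*} [DecidableEq ι] (G : ι → ι → Prop) [DecidableRel G]
    (hsym : ∀ i j, G i j → G j i) (hirr : ∀ i, ¬ G i i) (V : Finset ι) :
    ∃ I ⊆ V, (∀ i ∈ I, ∀ j ∈ I, ¬ G i j) ∧
      V.card ^ 2 ≤ I.card * (V.card + ∑ v ∈ V, (V.filter (G v)).card) := by
  induction V using Finset.strongInductionOn with
  | _ V ih =>
    rcases V.eq_empty_or_nonempty with rfl | hne
    · exact ⟨∅, subset_rfl, by simp, by simp⟩
    obtain ⟨v, hvV, hvmin⟩ := V.exists_min_image (fun u => (V.filter (G u)).card) hne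
    set d := (V.filter (G v)).card with hd
    have hvnotf : v ∉ V.filter (G v) := fun h => hirr v (mem_filter.mp h).2
    have hNvV : insert v (V.filter (G v)) ⊆ V := insert_subset hvV (filter_subset _ _)
    have hNvcard : (insert v (V.filter (G v))).card = d + 1 := card_insert_of_notMem hvnotf
    have hss : V \ insert v (V.filter (G v)) ⊂ V :=
      Finset.sdiff_ssubset hNvV ⟨v, mem_insert_self _ _⟩
    obtain ⟨I', hI'sub, hI'ind, hI'card⟩ := ih _ hss
    have hvI' : v ∉ I' := by
      intro h
      exact (mem_sdiff.mp (hI'sub h)).2 (mem_insert_self _ _)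
    refine ⟨insert v I', insert_subset hvV (hI'sub.trans sdiff_subset), ?_, ?_⟩
    · intro i hi j hj
      rcases mem_insert.mp hi with rfl | hi'
      · rcases mem_insert.mp hj with rfl | hj'
        · exact hirr _
        · intro hG
          have hj2 := mem_sdiff.mp (hI'sub hj')
          exact hj2.2 (mem_insert_of_mem (mem_filter.mpr ⟨hj2.1, hG⟩))
      · rcases mem_insert.mp hj with rfl | hj'
        · intro hG
          have hi2 := mem_sdiff.mp (hI'sub hi')
          exact hi2.2 (mem_insert_of_mem (mem_filter.mpr ⟨hi2.1, hsym _ _ hG⟩))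
        · exact hI'ind i hi' j hj'
    · -- arithmetic
      set n' := (V \ insert v (V.filter (G v))).card with hn'
      set s' := ∑ u ∈ V \ insert v (V.filter (G v)),
        ((V \ insert v (V.filter (G v))).filter (G u)).card with hs'
      set a := I'.card with ha
      have hcardI : (insert v I').card = a + 1 := card_insert_of_notMem hvI'
      have hn : V.card = n' + (d + 1) := by
        have h1 := Finset.card_le_card hNvV
        rw [hn', card_sdiff_of_subset hNvV, hNvcard]
        omega
      have hq : s' + (d + 1) * d ≤ ∑ u ∈ V, (V.filter (G u)).card := by
        have e1 : ∑ u ∈ V \ insert v (V.filter (G v)), (V.filter (G u)).card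
            + ∑ u ∈ insert v (V.filter (G v)), (V.filter (G u)).card
            = ∑ u ∈ V, (V.filter (G u)).card := Finset.sum_sdiff hNvV
        have e2 : s' ≤ ∑ u ∈ V \ insert v (V.filter (G v)), (V.filter (G u)).card :=
          Finset.sum_le_sum fun u hu => card_le_card (filter_subset_filter _ sdiff_subset)
        have e3 : (d + 1) * d ≤ ∑ u ∈ insert v (V.filter (G v)), (V.filter (G u)).card := by
          calc (d + 1) * d = (insert v (V.filter (G v))).card * d := by rw [hNvcard]
            _ ≤ _ := by
                rw [← smul_eq_mul]
                exact Finset.card_nsmul_le_sum _ _ _ (fun u hu => hvmin u (hNvV hu))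
        omega
      have key : 2 * n' * (d + 1) ≤ a * (d + 1) ^ 2 + (n' + s') := by
        rcases Nat.eq_zero_or_pos a with h0 | hpos
        · have hz : n' = 0 := by
            have := hI'card
            rw [h0] at this
            simpa using Nat.le_zero.mp (by simpa using this)
          simp [hz]
        · have h2 : a * (2 * n' * (d + 1)) ≤ a * (a * (d + 1) ^ 2 + (n' + s')) := by
            calc a * (2 * n' * (d + 1)) = 2 * (a * (d + 1)) * n' := by ring
              _ ≤ (a * (d + 1)) ^ 2 + n' ^ 2 := nat_amgm _ _
              _ ≤ (a * (d + 1)) ^ 2 + a * (n' + s') := Nat.add_le_add_left hI'card _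
              _ = a * (a * (d + 1) ^ 2 + (n' + s')) := by ring
          exact Nat.le_of_mul_le_mul_left h2 hpos
      rw [hcardI, hn]
      have hfin : (n' + (d + 1)) ^ 2 ≤ (a + 1) * ((n' + s') + (d + 1) ^ 2) := by
        nlinarith [hI'card, key]
      refine hfin.trans ?_
      apply Nat.mul_le_mul_left
      have hd2 : (d + 1) ^ 2 = (d + 1) * d + (d + 1) := by ring
      omega

private lemma sum_prob_le_one {X : Type*} [MeasurableSpace X] (μ : Measure X)
    [IsProbabilityMeasure μ] {N : ℕ} (B : Fin N → Set X)
    (hBm : ∀ i, MeasurableSet (B i)) (hBd : Pairwise (Function.onFun Disjoint B))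
    (F : Finset (Fin N)) : ∑ j ∈ F, μ (B j) ≤ 1 := by
  have h := measure_biUnion_finset (μ := μ) (s := F) (f := B)
      (fun i _ j _ hij => hBd hij) (fun b _ => hBm b)
  rw [← h]
  exact prob_le_one

private lemma key_mass {X : Type*} [MeasurableSpace X] (μ : Measure X)
    [IsProbabilityMeasure μ] {N : ℕ} (B : Fin N → Set X)
    (hBm : ∀ i, MeasurableSet (B i)) (hBd : Pairwise (Function.onFun Disjoint B))
    (δ a : ℝ≥0∞) (j : Fin N) (hown : a ≤ μ (B j)) :
    δ * ((Finset.univ.filter (fun u => j ≠ u ∧ δ < μ (B u))).card : ℝ≥0∞) + a ≤ 1 := by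
  classical
  set F := Finset.univ.filter (fun u : Fin N => j ≠ u ∧ δ < μ (B u)) with hF
  have hjF : j ∉ F := by simp [hF]
  have h1 : ∑ u ∈ insert j F, μ (B u) ≤ 1 := sum_prob_le_one μ B hBm hBd _
  rw [Finset.sum_insert hjF] at h1
  have h2 : δ * (F.card : ℝ≥0∞) ≤ ∑ u ∈ F, μ (B u) := by
    calc δ * (F.card : ℝ≥0∞) = F.card • δ := by rw [nsmul_eq_mul, mul_comm]
      _ ≤ _ := Finset.card_nsmul_le_sum F _ δ
          (fun u hu => le_of_lt (Finset.mem_filter.mp hu).2.2)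
  calc δ * (F.card : ℝ≥0∞) + a ≤ (∑ u ∈ F, μ (B u)) + μ (B j) := add_le_add h2 hown
    _ = μ (B j) + ∑ u ∈ F, μ (B u) := by rw [add_comm]
    _ ≤ 1 := h1

private lemma packing_of_witness {X : Type*} [MeasurableSpace X] {N : ℕ} (hN : 1 ≤ N)
    (B : Fin N → Set X) (ν : Fin N → Measure X) (δ : ℝ≥0∞)
    (hsum : 2 * (δ * ((∑ j : Fin N,
        (Finset.univ.filter (fun u => j ≠ u ∧ δ < ν j (B u))).card : ℕ) : ℝ≥0∞))
        + (N : ℝ≥0∞) * δ ≤ 2 * (N : ℝ≥0∞)) :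
    ∃ I : Finset (Fin N), (N : ℝ≥0∞) * δ / 2 ≤ (I.card : ℝ≥0∞) ∧
      ∀ j ∈ I, ∀ t ∈ I, j ≠ t → ν j (B t) ≤ δ := by
  classical
  set G : Fin N → Fin N → Prop := fun j t => j ≠ t ∧ (δ < ν j (B t) ∨ δ < ν t (B j)) with hG
  have hsym : ∀ i j, G i j → G j i := by
    rintro i j ⟨hne, h⟩
    exact ⟨hne.symm, h.symm⟩
  have hirr : ∀ i, ¬ G i i := by rintro i ⟨hne, -⟩; exact hne rfl
  obtain ⟨I, hIsub, hInd, hIcard⟩ := caroWeiAux G hsym hirr Finset.univ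
  set SO : ℕ := ∑ j : Fin N,
    (Finset.univ.filter (fun u => j ≠ u ∧ δ < ν j (B u))).card with hSO
  refine ⟨I, ?_, ?_⟩
  · have hdeg : ∀ v : Fin N, (Finset.univ.filter (G v)).card ≤
        (Finset.univ.filter (fun u => v ≠ u ∧ δ < ν v (B u))).card +
        (Finset.univ.filter (fun u => u ≠ v ∧ δ < ν u (B v))).card := by
      intro v
      have hsub : Finset.univ.filter (G v) ⊆
          Finset.univ.filter (fun u => v ≠ u ∧ δ < ν v (B u)) ∪
          Finset.univ.filter (fun u => u ≠ v ∧ δ < ν u (B v)) := by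
        intro u hu
        obtain ⟨hne, hor⟩ := (Finset.mem_filter.mp hu).2
        rcases hor with h | h
        · exact Finset.mem_union_left _ (Finset.mem_filter.mpr ⟨Finset.mem_univ _, hne, h⟩)
        · exact Finset.mem_union_right _ (Finset.mem_filter.mpr ⟨Finset.mem_univ _, hne.symm, h⟩)
      exact (Finset.card_le_card hsub).trans (Finset.card_union_le _ _)
    have hswap : ∑ v : Fin N, (Finset.univ.filter (fun u => u ≠ v ∧ δ < ν u (B v))).card
        = SO := by
      rw [hSO]
      simp only [Finset.card_filter]
      rw [Finset.sum_comm]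
    have hdegsum : ∑ v : Fin N, (Finset.univ.filter (G v)).card ≤ 2 * SO := by
      calc ∑ v : Fin N, (Finset.univ.filter (G v)).card
          ≤ ∑ v : Fin N, ((Finset.univ.filter (fun u => v ≠ u ∧ δ < ν v (B u))).card +
            (Finset.univ.filter (fun u => u ≠ v ∧ δ < ν u (B v))).card) :=
            Finset.sum_le_sum fun v _ => hdeg v
        _ = SO + SO := by rw [Finset.sum_add_distrib, hswap]
        _ = 2 * SO := by ring
    have hNat : N ^ 2 ≤ I.card * (N + 2 * SO) := by
      have h0 := hIcard
      simp only [Finset.card_univ, Fintype.card_fin] at h0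
      calc N ^ 2 ≤ I.card * (N + ∑ v : Fin N, (Finset.univ.filter (G v)).card) := h0
        _ ≤ I.card * (N + 2 * SO) := Nat.mul_le_mul_left _ (by omega)
    have hcast : ((N : ℝ≥0∞)) ^ 2 ≤ (I.card : ℝ≥0∞) * ((N : ℝ≥0∞) + 2 * (SO : ℝ≥0∞)) := by
      have := Nat.cast_le (α := ℝ≥0∞) |>.mpr hNat
      push_cast at this
      convert this using 2 <;> push_cast <;> ring
    have hδN : δ * ((N : ℝ≥0∞) + 2 * (SO : ℝ≥0∞)) ≤ 2 * (N : ℝ≥0∞) := by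
      have he : δ * ((N : ℝ≥0∞) + 2 * (SO : ℝ≥0∞))
          = 2 * (δ * (SO : ℝ≥0∞)) + (N : ℝ≥0∞) * δ := by ring
      rw [he]
      exact hsum
    have hN0 : (N : ℝ≥0∞) ≠ 0 := by
      simp only [ne_eq, Nat.cast_eq_zero]
      omega
    have hNt : (N : ℝ≥0∞) ≠ ⊤ := natCast_ne_top N
    have main : ((N : ℝ≥0∞) * δ) * (N : ℝ≥0∞) ≤ (2 * (I.card : ℝ≥0∞)) * (N : ℝ≥0∞) := by
      calc ((N : ℝ≥0∞) * δ) * (N : ℝ≥0∞) = δ * (N : ℝ≥0∞) ^ 2 := by ring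
        _ ≤ δ * ((I.card : ℝ≥0∞) * ((N : ℝ≥0∞) + 2 * (SO : ℝ≥0∞))) :=
            mul_le_mul_right hcast δ
        _ = (I.card : ℝ≥0∞) * (δ * ((N : ℝ≥0∞) + 2 * (SO : ℝ≥0∞))) := by ring
        _ ≤ (I.card : ℝ≥0∞) * (2 * (N : ℝ≥0∞)) := mul_le_mul_right hδN _
        _ = (2 * (I.card : ℝ≥0∞)) * (N : ℝ≥0∞) := by ring
    have hfin : (N : ℝ≥0∞) * δ ≤ 2 * (I.card : ℝ≥0∞) :=
      (ENNReal.mul_le_mul_iff_left hN0 hNt).mp main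
    rw [ENNReal.div_le_iff_le_mul (Or.inl two_ne_zero) (Or.inl ENNReal.ofNat_ne_top)]
    calc (N : ℝ≥0∞) * δ ≤ 2 * (I.card : ℝ≥0∞) := hfin
      _ = (I.card : ℝ≥0∞) * 2 := by ring
  · intro j hj t ht hjt
    have h := hInd j hj t ht
    by_contra hc
    exact h ⟨hjt, Or.inl (not_le.mp hc)⟩

private lemma finish_pack {X : Type*} [MeasurableSpace X] (U : Set (Measure X)) {N : ℕ}
    {B : Fin N → Set X} (hBm : ∀ i, MeasurableSet (B i)) (hBd : Pairwise (Function.onFun Disjoint B))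
    {ν : Fin N → Measure X} (hνU : ∀ j, ν j ∈ U) {ε' δ : ℝ≥0∞}
    (hown : ∀ j, ε' ≤ ν j (B j)) (I : Finset (Fin N))
    (hcard : (N : ℝ≥0∞) * δ / 2 ≤ (I.card : ℝ≥0∞))
    (hcross : ∀ j ∈ I, ∀ t ∈ I, j ≠ t → ν j (B t) ≤ δ) :
    ∃ k : ℕ, (N : ℝ≥0∞) * δ / 2 ≤ (k : ℝ≥0∞) ∧
      ∃ (A : Fin k → Set X) (μs : Fin k → Measure X),
        (∀ i, MeasurableSet (A i)) ∧ Pairwise (Function.onFun Disjoint A) ∧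
        (∀ i, μs i ∈ U) ∧ (∀ i, ε' ≤ μs i (A i)) ∧
        ∀ i j, i ≠ j → μs i (A j) ≤ δ := by
  set e := I.orderIsoOfFin rfl with he
  have hmem : ∀ i, ((e i : {x // x ∈ I}) : Fin N) ∈ I := fun i => (e i).2
  have hinj : ∀ {i j}, ((e i : {x // x ∈ I}) : Fin N) = ((e j : {x // x ∈ I}) : Fin N) → i = j :=
    fun h => e.injective (Subtype.ext h)
  refine ⟨I.card, hcard, fun i => B (e i), fun i => ν (e i), fun i => hBm _, ?_,
    fun i => hνU _, fun i => hown _, ?_⟩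
  · intro i j hij
    exact hBd fun h => hij (hinj h)
  · intro i j hij
    exact hcross _ (hmem i) _ (hmem j) fun h => hij (hinj h)

theorem stmt12 {X : Type*} [MeasurableSpace X] (U : Set (Measure X)) (hU : U.Nonempty)
    (hprob : ∀ μ ∈ U, IsProbabilityMeasure μ)
    (ε δ : ℝ≥0∞) (hε : 0 < ε) (hε1 : ε ≤ 1) (hδ : 0 < δ) (hδ1 : δ ≤ 1)
    (N : ℕ) (hN : 1 ≤ N)
    (hfrag : ∃ B : Fin N → Set X, (∀ i, MeasurableSet (B i)) ∧
      Pairwise (Function.onFun Disjoint B) ∧ ∀ i, ε ≤ ⨆ μ ∈ U, μ (B i)) :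
    ∀ ε' : ℝ≥0∞, ε' < ε → ∃ k : ℕ, (N : ℝ≥0∞) * δ / 2 ≤ (k : ℝ≥0∞) ∧
      ∃ (A : Fin k → Set X) (μs : Fin k → Measure X),
        (∀ i, MeasurableSet (A i)) ∧ Pairwise (Function.onFun Disjoint A) ∧
        (∀ i, μs i ∈ U) ∧ (∀ i, ε' ≤ μs i (A i)) ∧
        ∀ i j, i ≠ j → μs i (A j) ≤ δ := by
  classical
  intro ε' hε'
  obtain ⟨B, hBm, hBd, hBsup⟩ := hfrag
  have hwit : ∀ i : Fin N, ∃ μ, μ ∈ U ∧ ε' < μ (B i) := by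
    intro i
    have h : ε' < ⨆ μ ∈ U, μ (B i) := lt_of_lt_of_le hε' (hBsup i)
    obtain ⟨μ, hμ⟩ := lt_iSup_iff.mp h
    obtain ⟨hμU, hlt⟩ := lt_iSup_iff.mp hμ
    exact ⟨μ, hμU, hlt⟩
  by_cases hcase : δ / 2 ≤ ε'
  · -- case (i)
    choose ν hνU hνlt using hwit
    have hper : ∀ j : Fin N,
        δ * ((Finset.univ.filter (fun u => j ≠ u ∧ δ < ν j (B u))).card : ℝ≥0∞) + ε' ≤ 1 := by
      intro j
      haveI := hprob _ (hνU j)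
      exact key_mass (ν j) B hBm hBd δ ε' j (le_of_lt (hνlt j))
    set SO : ℕ := ∑ j : Fin N,
      (Finset.univ.filter (fun u => j ≠ u ∧ δ < ν j (B u))).card with hSO
    have hsum0 : δ * (SO : ℝ≥0∞) + (N : ℝ≥0∞) * ε' ≤ (N : ℝ≥0∞) := by
      have h1 : ∑ j : Fin N,
          (δ * ((Finset.univ.filter (fun u => j ≠ u ∧ δ < ν j (B u))).card : ℝ≥0∞) + ε')
          ≤ ∑ _j : Fin N, (1 : ℝ≥0∞) := Finset.sum_le_sum fun j _ => hper j
      simp only [Finset.sum_add_distrib, ← Finset.mul_sum, Finset.sum_const,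
        Finset.card_univ, Fintype.card_fin, nsmul_eq_mul, mul_one] at h1
      rw [hSO]
      push_cast
      convert h1 using 2
    have hsum : 2 * (δ * (SO : ℝ≥0∞)) + (N : ℝ≥0∞) * δ ≤ 2 * (N : ℝ≥0∞) := by
      have hδ2 : (N : ℝ≥0∞) * δ ≤ 2 * ((N : ℝ≥0∞) * ε') := by
        have hδε : δ ≤ 2 * ε' := by
          have h2 : 2 * (δ / 2) ≤ 2 * ε' := mul_le_mul_right hcase 2
          rwa [ENNReal.mul_div_cancel two_ne_zero ENNReal.ofNat_ne_top] at h2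
        calc (N : ℝ≥0∞) * δ ≤ (N : ℝ≥0∞) * (2 * ε') := mul_le_mul_right hδε _
          _ = 2 * ((N : ℝ≥0∞) * ε') := by ring
      calc 2 * (δ * (SO : ℝ≥0∞)) + (N : ℝ≥0∞) * δ
          ≤ 2 * (δ * (SO : ℝ≥0∞)) + 2 * ((N : ℝ≥0∞) * ε') := add_le_add_right hδ2 _ |>.trans_eq rfl
        _ = 2 * (δ * (SO : ℝ≥0∞) + (N : ℝ≥0∞) * ε') := by ring
        _ ≤ 2 * (N : ℝ≥0∞) := mul_le_mul_right hsum0 2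
    obtain ⟨I, hIc, hIcross⟩ := packing_of_witness hN B ν δ (by rw [hSO] at hsum; exact hsum)
    exact finish_pack U hBm hBd hνU (fun j => (hνlt j).le) I hIc hIcross
  · -- case ε' < δ/2
    have hcase' : ε' < δ / 2 := not_le.mp hcase
    have hwit2 : ∀ j : Fin N, ∃ μ, μ ∈ U ∧ ε' ≤ μ (B j) ∧
        ((∃ ρ ∈ U, δ < ρ (B j)) → δ < μ (B j)) := by
      intro j
      by_cases h : ∃ ρ ∈ U, δ < ρ (B j)
      · obtain ⟨ρ, hρU, hρ⟩ := h
        refine ⟨ρ, hρU, ?_, fun _ => hρ⟩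
        exact le_of_lt (lt_of_lt_of_le hcase' (le_trans ENNReal.half_le_self hρ.le))
      · obtain ⟨μ, hμU, hμ⟩ := hwit j
        exact ⟨μ, hμU, hμ.le, fun hh => absurd hh h⟩
    choose ν hνU hνown hνheavy using hwit2
    set T : Finset (Fin N) := Finset.univ.filter (fun j => ∃ ρ ∈ U, δ < ρ (B j)) with hT
    by_cases hTbig : N ≤ 2 * T.card
    · -- case (ii)
      have hper : ∀ j : Fin N,
          δ * ((Finset.univ.filter (fun u => j ≠ u ∧ δ < ν j (B u))).card : ℝ≥0∞)
          + (if j ∈ T then δ else 0) ≤ 1 := by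
        intro j
        haveI := hprob _ (hνU j)
        by_cases hj : j ∈ T
        · rw [if_pos hj]
          have hjq : ∃ ρ ∈ U, δ < ρ (B j) := (Finset.mem_filter.mp hj).2
          exact key_mass (ν j) B hBm hBd δ δ j (hνheavy j hjq).le
        · rw [if_neg hj]
          exact key_mass (ν j) B hBm hBd δ 0 j zero_le
      set SO : ℕ := ∑ j : Fin N,
        (Finset.univ.filter (fun u => j ≠ u ∧ δ < ν j (B u))).card with hSO
      have hsum0 : δ * (SO : ℝ≥0∞) + (T.card : ℝ≥0∞) * δ ≤ (N : ℝ≥0∞) := by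
        have h1 : ∑ j : Fin N,
            (δ * ((Finset.univ.filter (fun u => j ≠ u ∧ δ < ν j (B u))).card : ℝ≥0∞)
              + (if j ∈ T then δ else 0))
            ≤ ∑ _j : Fin N, (1 : ℝ≥0∞) := Finset.sum_le_sum fun j _ => hper j
        simp only [Finset.sum_add_distrib, ← Finset.mul_sum, Finset.sum_const,
          Finset.card_univ, Fintype.card_fin, nsmul_eq_mul, mul_one] at h1
        have hite : ∑ j : Fin N, (if j ∈ T then δ else 0) = (T.card : ℝ≥0∞) * δ := by
          rw [Finset.sum_ite_mem, Finset.univ_inter, Finset.sum_const, nsmul_eq_mul]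
        rw [hite] at h1
        rw [hSO]
        push_cast
        convert h1 using 2
      have hsum : 2 * (δ * (SO : ℝ≥0∞)) + (N : ℝ≥0∞) * δ ≤ 2 * (N : ℝ≥0∞) := by
        have hTc : (N : ℝ≥0∞) ≤ 2 * (T.card : ℝ≥0∞) := by
          have := Nat.cast_le (α := ℝ≥0∞) |>.mpr hTbig
          push_cast at this
          exact this
        have hδ2 : (N : ℝ≥0∞) * δ ≤ 2 * ((T.card : ℝ≥0∞) * δ) := by
          calc (N : ℝ≥0∞) * δ ≤ (2 * (T.card : ℝ≥0∞)) * δ := mul_le_mul_left hTc δ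
            _ = 2 * ((T.card : ℝ≥0∞) * δ) := by ring
        calc 2 * (δ * (SO : ℝ≥0∞)) + (N : ℝ≥0∞) * δ
            ≤ 2 * (δ * (SO : ℝ≥0∞)) + 2 * ((T.card : ℝ≥0∞) * δ) := add_le_add_right hδ2 _
          _ = 2 * (δ * (SO : ℝ≥0∞) + (T.card : ℝ≥0∞) * δ) := by ring
          _ ≤ 2 * (N : ℝ≥0∞) := mul_le_mul_right hsum0 2
      obtain ⟨I, hIc, hIcross⟩ := packing_of_witness hN B ν δ (by rw [hSO] at hsum; exact hsum)
      exact finish_pack U hBm hBd hνU hνown I hIc hIcross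
    · -- case (iii)
      set I : Finset (Fin N) :=
        Finset.univ.filter (fun j => ¬ ∃ ρ ∈ U, δ < ρ (B j)) with hI
      have hcardTI : T.card + I.card = N := by
        have := Finset.card_filter_add_card_filter_not
          (s := (Finset.univ : Finset (Fin N))) (p := fun j => ∃ ρ ∈ U, δ < ρ (B j))
        simpa [hT, hI, Finset.card_univ] using this
      have hIcard : (N : ℝ≥0∞) * δ / 2 ≤ (I.card : ℝ≥0∞) := by
        have h2 : N ≤ 2 * I.card := by omega
        rw [ENNReal.div_le_iff_le_mul (Or.inl two_ne_zero) (Or.inl ENNReal.ofNat_ne_top)]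
        calc (N : ℝ≥0∞) * δ ≤ (N : ℝ≥0∞) * 1 := mul_le_mul_right hδ1 _
          _ = (N : ℝ≥0∞) := mul_one _
          _ ≤ (I.card : ℝ≥0∞) * 2 := by
              have := Nat.cast_le (α := ℝ≥0∞) |>.mpr h2
              push_cast at this
              calc (N : ℝ≥0∞) ≤ 2 * (I.card : ℝ≥0∞) := this
                _ = (I.card : ℝ≥0∞) * 2 := by ring
      have hIcross : ∀ j ∈ I, ∀ t ∈ I, j ≠ t → ν j (B t) ≤ δ := by
        intro j hj t ht hjt
        have hts := (Finset.mem_filter.mp ht).2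
        exact le_of_not_gt fun hc => hts ⟨ν j, hνU j, hc⟩
      exact finish_pack U hBm hBd hνU hνown I hIcard hIcross
end

section
/- Let U be a family of probability measures on X, ε ∈ (0,1], and suppose the ε-fragmentation number N_U(ε) is infinite (for every k there exist k pairwise disjoint measurable sets each with envelope mass ≥ ε). Then there exist pairwise disjoint measurable sets (A_i)_{i≥1} and measures (μ_i)_{i≥1} in U such that μ_i(A_i) ≥ ε/2 for all i ≥ 1, and for every n ≥ 1 and all distinct i, j with 2^n ≤ i, j < 2^{n+1}, μ_i(A_j) ≤ 2^{−n}. -/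
open MeasureTheory Set Filter ENNReal

lemma turanAux {ι : Type*} [DecidableEq ι] (r : ι → ι → Prop) [DecidableRel r]
    (hirr : ∀ i, ¬ r i i) (d : ℕ) :
    ∀ (m : ℕ) (S : Finset ι), (∀ i ∈ S, (S.filter (fun j => r i j)).card ≤ d) →
      (2 * d + 1) * m ≤ S.card →
      ∃ T, T ⊆ S ∧ T.card = m ∧ ∀ i ∈ T, ∀ j ∈ T, i ≠ j → ¬ r i j := by
  intro m
  induction m with
  | zero => intro S _ _; exact ⟨∅, Finset.empty_subset _, rfl, by simp⟩
  | succ m ih =>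
    intro S hdeg hcard
    have hS : 0 < S.card := by nlinarith
    -- counting: exists low degree vertex
    have hsum1 : ∑ v ∈ S, (S.filter (fun u => r v u)).card ≤ d * S.card := by
      calc ∑ v ∈ S, (S.filter (fun u => r v u)).card ≤ ∑ _v ∈ S, d :=
            Finset.sum_le_sum (fun v hv => hdeg v hv)
        _ = d * S.card := by rw [Finset.sum_const, smul_eq_mul, mul_comm]
    have hsum2 : ∑ v ∈ S, (S.filter (fun u => r u v)).card ≤ d * S.card := by
      have : ∑ v ∈ S, (S.filter (fun u => r u v)).card
          = ∑ u ∈ S, (S.filter (fun v => r u v)).card := by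
        simp only [Finset.card_filter]
        exact Finset.sum_comm
      rw [this]; exact hsum1
    have hv : ∃ v ∈ S, (S.filter (fun u => r v u ∨ r u v)).card ≤ 2 * d := by
      by_contra hcon
      push_neg at hcon
      have hlow : (2 * d + 1) * S.card ≤ ∑ v ∈ S, (S.filter (fun u => r v u ∨ r u v)).card := by
        calc (2 * d + 1) * S.card = ∑ _v ∈ S, (2 * d + 1) := by
              rw [Finset.sum_const, smul_eq_mul, mul_comm]
          _ ≤ _ := Finset.sum_le_sum (fun v hv => hcon v hv)
      have hup : ∑ v ∈ S, (S.filter (fun u => r v u ∨ r u v)).card ≤ 2 * d * S.card := by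
        calc ∑ v ∈ S, (S.filter (fun u => r v u ∨ r u v)).card
            ≤ ∑ v ∈ S, ((S.filter (fun u => r v u)).card + (S.filter (fun u => r u v)).card) := by
              refine Finset.sum_le_sum (fun v _ => ?_)
              rw [Finset.filter_or]
              exact Finset.card_union_le _ _
          _ = (∑ v ∈ S, (S.filter (fun u => r v u)).card)
              + ∑ v ∈ S, (S.filter (fun u => r u v)).card := Finset.sum_add_distrib
          _ ≤ d * S.card + d * S.card := Nat.add_le_add hsum1 hsum2
          _ = 2 * d * S.card := by ring
      nlinarith
    obtain ⟨v, hvS, hvdeg⟩ := hv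
    set Nv := S.filter (fun u => r v u ∨ r u v) with hNv
    set S' := S \ insert v Nv with hS'
    have hS'sub : S' ⊆ S := Finset.sdiff_subset
    have hS'card : (2 * d + 1) * m ≤ S'.card := by
      have h1 : S.card - (insert v Nv).card ≤ S'.card := Finset.le_card_sdiff _ _
      have h2 : (insert v Nv).card ≤ Nv.card + 1 := Finset.card_insert_le _ _
      have h3 : (2 * d + 1) * m + (2 * d + 1) ≤ S.card := by nlinarith
      omega
    obtain ⟨T', hT'sub, hT'card, hT'ind⟩ := ih S'
      (fun i hi => le_trans (Finset.card_le_card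
        (Finset.filter_subset_filter _ hS'sub)) (hdeg i (hS'sub hi))) hS'card
    have hvnotS' : v ∉ S' := by simp [hS']
    have hvnotT' : v ∉ T' := fun h => hvnotS' (hT'sub h)
    refine ⟨insert v T', ?_, ?_, ?_⟩
    · exact Finset.insert_subset hvS (hT'sub.trans hS'sub)
    · rw [Finset.card_insert_of_notMem hvnotT', hT'card]
    · intro i hi j hj hij
      rcases Finset.mem_insert.1 hi with hi' | hi' <;> rcases Finset.mem_insert.1 hj with hj' | hj'
      · exact absurd (hi'.trans hj'.symm) hij
      · subst hi'
        have hjd := Finset.mem_sdiff.1 (hT'sub hj')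
        intro hr
        exact hjd.2 (Finset.mem_insert_of_mem (Finset.mem_filter.2 ⟨hjd.1, Or.inl hr⟩))
      · subst hj'
        have hid := Finset.mem_sdiff.1 (hT'sub hi')
        intro hr
        exact hid.2 (Finset.mem_insert_of_mem (Finset.mem_filter.2 ⟨hid.1, Or.inr hr⟩))
      · exact hT'ind i hi' j hj' hij

lemma markovCard {X : Type*} [MeasurableSpace X] (μ : Measure X) [IsProbabilityMeasure μ]
    {ι : Type*} [DecidableEq ι] (S : Finset ι) (B : ι → Set X) (hmeas : ∀ i, MeasurableSet (B i))
    (hdisj : ∀ i ∈ S, ∀ j ∈ S, i ≠ j → Disjoint (B i) (B j))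
    (c : ℕ) (hc : 0 < c) [DecidablePred (fun j => (c : ℝ≥0∞)⁻¹ < μ (B j))] :
    (S.filter (fun j => (c : ℝ≥0∞)⁻¹ < μ (B j))).card ≤ c := by
  set T := S.filter (fun j => (c : ℝ≥0∞)⁻¹ < μ (B j)) with hT
  have hTS : T ⊆ S := Finset.filter_subset _ _
  have hpd : (↑T : Set ι).PairwiseDisjoint B := by
    intro i hi j hj hij
    exact hdisj i (hTS hi) j (hTS hj) hij
  have h1 : ∑ j ∈ T, μ (B j) = μ (⋃ j ∈ T, B j) :=
    (measure_biUnion_finset hpd (fun b _ => hmeas b)).symm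
  have h2 : μ (⋃ j ∈ T, B j) ≤ 1 := prob_le_one
  have h3 : (T.card : ℝ≥0∞) * (c : ℝ≥0∞)⁻¹ ≤ ∑ j ∈ T, μ (B j) := by
    rw [← nsmul_eq_mul]
    refine Finset.card_nsmul_le_sum T _ _ (fun j hj => ?_)
    exact (Finset.mem_filter.1 hj).2.le
  have h4 : (T.card : ℝ≥0∞) * (c : ℝ≥0∞)⁻¹ ≤ 1 := h3.trans (h1.le.trans h2)
  have h5 : (T.card : ℝ≥0∞) ≤ c := by
    rw [← div_eq_mul_inv] at h4
    rw [ENNReal.div_le_iff_le_mul (Or.inl (by exact_mod_cast hc.ne')) (Or.inl (by simp))] at h4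
    simpa using h4
  exact_mod_cast h5

lemma supWitness {X : Type*} [MeasurableSpace X] (U : Set (Measure X)) (B : Set X) {e ε : ℝ≥0∞}
    (he : e < ε) (hsup : ε ≤ ⨆ μ ∈ U, μ B) : ∃ μ ∈ U, e < μ B := by
  have h : e < ⨆ μ ∈ U, μ B := lt_of_lt_of_le he hsup
  rw [lt_iSup_iff] at h
  obtain ⟨μ, hμ⟩ := h
  rw [lt_iSup_iff] at hμ
  obtain ⟨hm, h'⟩ := hμ
  exact ⟨μ, hm, h'⟩

lemma stepLemma {X : Type*} [MeasurableSpace X] (U : Set (Measure X))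
    (hprob : ∀ μ ∈ U, IsProbabilityMeasure μ) (ε : ℝ≥0∞)
    (hfrag : ∀ k : ℕ, ∃ B : Fin k → Set X, (∀ i, MeasurableSet (B i)) ∧
      Pairwise (Function.onFun Disjoint B) ∧ ∀ i, ε ≤ ⨆ μ ∈ U, μ (B i))
    (e : ℝ≥0∞) (he : e < ε) (m c c' : ℕ) (hc : 0 < c) (hc' : 0 < c')
    (G : Finset (Measure X)) (hG : ∀ ν ∈ G, IsProbabilityMeasure ν) :
    ∃ (C : Fin m → Set X) (ν : Fin m → Measure X),
      (∀ j, MeasurableSet (C j)) ∧ Pairwise (Function.onFun Disjoint C) ∧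
      (∀ j, ν j ∈ U) ∧ (∀ j, e < ν j (C j)) ∧
      (∀ i j, i ≠ j → ν i (C j) ≤ (c : ℝ≥0∞)⁻¹) ∧
      (∀ g ∈ G, ∀ j, g (C j) ≤ (c' : ℝ≥0∞)⁻¹) := by
  classical
  set k := (2 * c + 1) * m + G.card * c' with hk
  obtain ⟨B, hBmeas, hBdisj, hBsup⟩ := hfrag k
  choose ν hνU hνB using fun i : Fin k => supWitness U (B i) he (hBsup i)
  set Bad : Finset (Fin k) :=
    Finset.univ.filter (fun j => ∃ g ∈ G, (c' : ℝ≥0∞)⁻¹ < g (B j)) with hBad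
  have hBadcard : Bad.card ≤ G.card * c' := by
    have hsub : Bad ⊆ G.biUnion
        (fun g => Finset.univ.filter (fun j => (c' : ℝ≥0∞)⁻¹ < g (B j))) := by
      intro j hj
      obtain ⟨g, hg, hg'⟩ := (Finset.mem_filter.1 hj).2
      exact Finset.mem_biUnion.2 ⟨g, hg, Finset.mem_filter.2 ⟨Finset.mem_univ _, hg'⟩⟩
    calc Bad.card ≤ _ := Finset.card_le_card hsub
      _ ≤ ∑ g ∈ G, (Finset.univ.filter (fun j => (c' : ℝ≥0∞)⁻¹ < g (B j))).card :=
          Finset.card_biUnion_le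
      _ ≤ ∑ _g ∈ G, c' := Finset.sum_le_sum (fun g hg => by
          haveI := hG g hg
          exact markovCard g Finset.univ B hBmeas
            (fun i _ j _ hij => hBdisj hij) c' hc')
      _ = G.card * c' := by rw [Finset.sum_const, smul_eq_mul]
  set S₁ : Finset (Fin k) := Finset.univ \ Bad with hS₁
  have hS₁card : (2 * c + 1) * m ≤ S₁.card := by
    have h1 : (Finset.univ : Finset (Fin k)).card - Bad.card ≤ S₁.card :=
      Finset.le_card_sdiff _ _
    have h2 : (Finset.univ : Finset (Fin k)).card = k := Finset.card_univ.trans (Fintype.card_fin k)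
    omega
  set r : Fin k → Fin k → Prop := fun i j => i ≠ j ∧ (c : ℝ≥0∞)⁻¹ < ν i (B j) with hr
  have hout : ∀ i ∈ S₁, (S₁.filter (fun j => r i j)).card ≤ c := by
    intro i _
    haveI := hprob _ (hνU i)
    refine le_trans (Finset.card_le_card ?_)
      (markovCard (ν i) Finset.univ B hBmeas (fun a _ b _ hab => hBdisj hab) c hc)
    intro j hj
    exact Finset.mem_filter.2 ⟨Finset.mem_univ _, (Finset.mem_filter.1 hj).2.2⟩
  obtain ⟨T, hTsub, hTcard, hTind⟩ :=
    turanAux r (fun i hi => hi.1 rfl) c m S₁ hout hS₁card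
  set σ : Fin m → Fin k := fun j => ((T.orderIsoOfFin hTcard) j : Fin k) with hσ
  have hσinj : Function.Injective σ := fun a b h =>
    (T.orderIsoOfFin hTcard).injective (Subtype.ext h)
  have hσT : ∀ j, σ j ∈ T := fun j => ((T.orderIsoOfFin hTcard) j).2
  have hσS₁ : ∀ j, σ j ∈ S₁ := fun j => hTsub (hσT j)
  refine ⟨fun j => B (σ j), fun j => ν (σ j), fun j => hBmeas _, ?_, fun j => hνU _,
    fun j => hνB _, ?_, ?_⟩
  · intro a b hab
    exact hBdisj (fun h => hab (hσinj h))
  · intro a b hab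
    have h := hTind (σ a) (hσT a) (σ b) (hσT b) (fun h => hab (hσinj h))
    rw [hr] at h
    exact not_lt.1 (fun hlt => h ⟨fun h' => hab (hσinj h'), hlt⟩)
  · intro g hg j
    have hj := hσS₁ j
    rw [hS₁, Finset.mem_sdiff] at hj
    have : ¬ ∃ g ∈ G, (c' : ℝ≥0∞)⁻¹ < g (B (σ j)) := by
      intro hc
      exact hj.2 (Finset.mem_filter.2 ⟨Finset.mem_univ _, hc⟩)
    push_neg at this
    exact this g hg

lemma eLtEps (ε : ℝ≥0∞) (hε : 0 < ε) (hε1 : ε ≤ 1) : ε / 2 + ε / 4 < ε := by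
  have hfin : ε ≠ ∞ := (hε1.trans_lt (by norm_num)).ne
  have h24 : ε / 4 < ε / 2 := by
    rw [div_eq_mul_inv, div_eq_mul_inv]
    refine (ENNReal.mul_lt_mul_iff_right hε.ne' hfin).2 ?_
    rw [ENNReal.inv_lt_inv]
    norm_num
  calc ε / 2 + ε / 4 < ε / 2 + ε / 2 :=
        ENNReal.add_lt_add_left (by simp [ENNReal.div_eq_top, hfin]) h24
    _ = ε := ENNReal.add_halves ε

def fragInv {X : Type*} [MeasurableSpace X] (U : Set (Measure X)) (ε : ℝ≥0∞) (N : ℕ)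
    (n : ℕ) (p : (ℕ → Set X) × (ℕ → Measure X)) : Prop :=
  (∀ i, MeasurableSet (p.1 i)) ∧
  (∀ i, p.2 i ∈ U) ∧
  (∀ i, i < 2 ^ (n + 1) → ε / 2 + ε / 4 ≤ p.2 i (p.1 i)) ∧
  (∀ m, m ≤ n → ∀ i j, i < 2 ^ (m + 1) → j < 2 ^ (m + 1) →
      (m = 0 ∨ 2 ^ m ≤ i) → (m = 0 ∨ 2 ^ m ≤ j) → i ≠ j → Disjoint (p.1 i) (p.1 j)) ∧
  (∀ m, 1 ≤ m → m ≤ n → ∀ i j, 2 ^ m ≤ i → i < 2 ^ (m + 1) → 2 ^ m ≤ j → j < 2 ^ (m + 1) →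
      i ≠ j → p.2 i (p.1 j) ≤ ((2 ^ m : ℕ) : ℝ≥0∞)⁻¹) ∧
  (∀ m, 1 ≤ m → m ≤ n → ∀ i j, i < 2 ^ m → 2 ^ m ≤ j → j < 2 ^ (m + 1) →
      p.2 i (p.1 j) ≤ ((N * 4 ^ (m + 2) : ℕ) : ℝ≥0∞)⁻¹)

lemma fragBase {X : Type*} [MeasurableSpace X] (U : Set (Measure X)) (μ₀ : Measure X)
    (hμ₀ : μ₀ ∈ U) (hprob : ∀ μ ∈ U, IsProbabilityMeasure μ)
    (ε : ℝ≥0∞) (hε : 0 < ε) (hε1 : ε ≤ 1) (N : ℕ)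
    (hfrag : ∀ k : ℕ, ∃ B : Fin k → Set X, (∀ i, MeasurableSet (B i)) ∧
      Pairwise (Function.onFun Disjoint B) ∧ ∀ i, ε ≤ ⨆ μ ∈ U, μ (B i)) :
    ∃ p, fragInv U ε N 0 p := by
  classical
  obtain ⟨C, ν, hCmeas, hCdisj, hνU, hνC, -, -⟩ :=
    stepLemma U hprob ε hfrag (ε / 2 + ε / 4) (eLtEps ε hε hε1) 2 1 1
      (by norm_num) (by norm_num) ∅ (by simp)
  refine ⟨(fun i => if h : i < 2 then C ⟨i, h⟩ else ∅,
           fun i => if h : i < 2 then ν ⟨i, h⟩ else μ₀), ?_, ?_, ?_, ?_, ?_, ?_⟩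
  · intro i
    by_cases h : i < 2 <;> simp [h, hCmeas]
  · intro i
    by_cases h : i < 2 <;> simp [h, hνU, hμ₀]
  · intro i hi
    have h2 : i < 2 := by simpa using hi
    simp only [dif_pos h2]
    exact (hνC _).le
  · intro m hm i j hi hj _ _ hij
    interval_cases m
    have hi2 : i < 2 := by simpa using hi
    have hj2 : j < 2 := by simpa using hj
    simp only [dif_pos hi2, dif_pos hj2]
    exact hCdisj (by simp [Fin.ext_iff, hij])
  · intro m hm hm'
    omega
  · intro m hm hm'
    omega

lemma fragStepEx {X : Type*} [MeasurableSpace X] (U : Set (Measure X))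
    (hprob : ∀ μ ∈ U, IsProbabilityMeasure μ)
    (ε : ℝ≥0∞) (hε : 0 < ε) (hε1 : ε ≤ 1) (N : ℕ) (hN0 : 0 < N)
    (hfrag : ∀ k : ℕ, ∃ B : Fin k → Set X, (∀ i, MeasurableSet (B i)) ∧
      Pairwise (Function.onFun Disjoint B) ∧ ∀ i, ε ≤ ⨆ μ ∈ U, μ (B i))
    (n : ℕ) (p : (ℕ → Set X) × (ℕ → Measure X)) (hp : fragInv U ε N n p) :
    ∃ q, fragInv U ε N (n + 1) q ∧
      ∀ i, i < 2 ^ (n + 1) → q.1 i = p.1 i ∧ q.2 i = p.2 i := by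
  classical
  obtain ⟨hmeas, hmem, hself, hdisj, hcross, hold⟩ := hp
  set G : Finset (Measure X) := (Finset.range (2 ^ (n + 1))).image p.2 with hG
  have hGprob : ∀ ν ∈ G, IsProbabilityMeasure ν := by
    intro ν hν
    obtain ⟨i, -, rfl⟩ := Finset.mem_image.1 hν
    exact hprob _ (hmem i)
  obtain ⟨C, ν, hCmeas, hCdisj, hνU, hνC, hνcross, hνold⟩ :=
    stepLemma U hprob ε hfrag (ε / 2 + ε / 4) (eLtEps ε hε hε1)
      (2 ^ (n + 1)) (2 ^ (n + 1)) (N * 4 ^ (n + 3))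
      (Nat.pow_pos (by norm_num)) (by positivity) G hGprob
  have hpow : (2 : ℕ) ^ (n + 2) = 2 ^ (n + 1) + 2 ^ (n + 1) := by ring
  refine ⟨(fun i => if h : 2 ^ (n + 1) ≤ i ∧ i < 2 ^ (n + 2) then C ⟨i - 2 ^ (n + 1), by omega⟩
             else p.1 i,
           fun i => if h : 2 ^ (n + 1) ≤ i ∧ i < 2 ^ (n + 2) then ν ⟨i - 2 ^ (n + 1), by omega⟩
             else p.2 i), ⟨?_, ?_, ?_, ?_, ?_, ?_⟩, ?_⟩
  · intro i
    by_cases h : 2 ^ (n + 1) ≤ i ∧ i < 2 ^ (n + 2) <;> simp [h, hCmeas, hmeas]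
  · intro i
    by_cases h : 2 ^ (n + 1) ≤ i ∧ i < 2 ^ (n + 2) <;> simp [h, hνU, hmem]
  · intro i hi
    by_cases h : 2 ^ (n + 1) ≤ i ∧ i < 2 ^ (n + 2)
    · simp only [h, dif_pos]
      exact (hνC _).le
    · simp only [h, dif_neg, not_false_iff]
      have : i < 2 ^ (n + 1) := by omega
      exact hself i this
  · intro m hm i j hi hj hi' hj' hij
    rcases Nat.lt_or_ge m (n + 1) with hmn | hmn
    · have hin : i < 2 ^ (n + 1) := lt_of_lt_of_le hi (Nat.pow_le_pow_right (by norm_num) (by omega))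
      have hjn : j < 2 ^ (n + 1) := lt_of_lt_of_le hj (Nat.pow_le_pow_right (by norm_num) (by omega))
      have h1 : ¬ (2 ^ (n + 1) ≤ i ∧ i < 2 ^ (n + 2)) := by omega
      have h2 : ¬ (2 ^ (n + 1) ≤ j ∧ j < 2 ^ (n + 2)) := by omega
      simp only [h1, h2, dif_neg, not_false_iff]
      exact hdisj m (by omega) i j hi hj hi' hj' hij
    · have hm' : m = n + 1 := by omega
      subst hm'
      have hi2 : 2 ^ (n + 1) ≤ i := hi'.resolve_left (by omega)
      have hj2 : 2 ^ (n + 1) ≤ j := hj'.resolve_left (by omega)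
      have h1 : 2 ^ (n + 1) ≤ i ∧ i < 2 ^ (n + 2) := ⟨hi2, hi⟩
      have h2 : 2 ^ (n + 1) ≤ j ∧ j < 2 ^ (n + 2) := ⟨hj2, hj⟩
      simp only [h1, h2, dif_pos]
      exact hCdisj (by simp [Fin.ext_iff]; omega)
  · intro m hm1 hmn i j hi hi2 hj hj2 hij
    rcases Nat.lt_or_ge m (n + 1) with hmlt | hmge
    · have hin : i < 2 ^ (n + 1) := lt_of_lt_of_le hi2 (Nat.pow_le_pow_right (by norm_num) (by omega))
      have hjn : j < 2 ^ (n + 1) := lt_of_lt_of_le hj2 (Nat.pow_le_pow_right (by norm_num) (by omega))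
      have h1 : ¬ (2 ^ (n + 1) ≤ i ∧ i < 2 ^ (n + 2)) := by omega
      have h2 : ¬ (2 ^ (n + 1) ≤ j ∧ j < 2 ^ (n + 2)) := by omega
      simp only [h1, h2, dif_neg, not_false_iff]
      exact hcross m hm1 (by omega) i j hi hi2 hj hj2 hij
    · have hm' : m = n + 1 := by omega
      subst hm'
      have h1 : 2 ^ (n + 1) ≤ i ∧ i < 2 ^ (n + 2) := ⟨hi, hi2⟩
      have h2 : 2 ^ (n + 1) ≤ j ∧ j < 2 ^ (n + 2) := ⟨hj, hj2⟩
      simp only [h1, h2, dif_pos]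
      exact hνcross _ _ (by simp [Fin.ext_iff]; omega)
  · intro m hm1 hmn i j hi hj hj2
    rcases Nat.lt_or_ge m (n + 1) with hmlt | hmge
    · have hin : i < 2 ^ (n + 1) :=
        lt_of_lt_of_le hi (Nat.pow_le_pow_right (by norm_num) (by omega))
      have hjn : j < 2 ^ (n + 1) :=
        lt_of_lt_of_le hj2 (Nat.pow_le_pow_right (by norm_num) (by omega))
      have h1 : ¬ (2 ^ (n + 1) ≤ i ∧ i < 2 ^ (n + 2)) := by omega
      have h2 : ¬ (2 ^ (n + 1) ≤ j ∧ j < 2 ^ (n + 2)) := by omega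
      simp only [h1, h2, dif_neg, not_false_iff]
      exact hold m hm1 (by omega) i j hi hj hj2
    · have hm' : m = n + 1 := by omega
      subst hm'
      have hpw : (2:ℕ) ^ (n + 1) ≤ 2 ^ (n + 1) := le_refl _
      have h1 : ¬ (2 ^ (n + 1) ≤ i ∧ i < 2 ^ (n + 2)) := by omega
      have h2 : 2 ^ (n + 1) ≤ j ∧ j < 2 ^ (n + 2) := ⟨hj, hj2⟩
      simp only [h1, h2, dif_neg, dif_pos, not_false_iff]
      have hmemG : p.2 i ∈ G := Finset.mem_image.2 ⟨i, Finset.mem_range.2 (by omega), rfl⟩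
      have := hνold (p.2 i) hmemG ⟨j - 2 ^ (n + 1), by omega⟩
      have e3 : n + 1 + 2 = n + 3 := by omega
      rw [e3]
      exact this
  · intro i hi
    have h1 : ¬ (2 ^ (n + 1) ≤ i ∧ i < 2 ^ (n + 2)) := by omega
    exact ⟨dif_neg h1, dif_neg h1⟩

lemma termEq (N : ℕ) (hN0 : 0 < N) (M : ℕ) :
    ((2 ^ M : ℕ) : ℝ≥0∞) * ((N * 4 ^ (M + 2) : ℕ) : ℝ≥0∞)⁻¹
      = (N : ℝ≥0∞)⁻¹ * 16⁻¹ * ((2 : ℝ≥0∞) ^ M)⁻¹ := by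
  have hN1 : (N : ℝ≥0∞) ≠ 0 := Nat.cast_ne_zero.2 hN0.ne'
  have hN2 : (N : ℝ≥0∞) ≠ ⊤ := ENNReal.natCast_ne_top N
  have h2M0 : ((2 : ℝ≥0∞) ^ M) ≠ 0 := pow_ne_zero M (by norm_num)
  have h2Mt : ((2 : ℝ≥0∞) ^ M) ≠ ⊤ := ENNReal.pow_ne_top (by norm_num)
  push_cast
  have h4 : (4 : ℝ≥0∞) ^ (M + 2) = 2 ^ M * 2 ^ M * 16 := by
    have h44 : (4 : ℝ≥0∞) = 2 * 2 := by norm_num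
    rw [h44, mul_pow, pow_add, show ((2:ℝ≥0∞) ^ 2 = 4) from by norm_num]
    ring
  rw [h4, ENNReal.mul_inv (Or.inl hN1) (Or.inl hN2),
    ENNReal.mul_inv (Or.inl (mul_ne_zero h2M0 h2M0)) (Or.inr (by norm_num)),
    ENNReal.mul_inv (Or.inl h2M0) (Or.inl h2Mt)]
  calc (2:ℝ≥0∞) ^ M * ((N : ℝ≥0∞)⁻¹ * (((2:ℝ≥0∞) ^ M)⁻¹ * ((2:ℝ≥0∞) ^ M)⁻¹ * 16⁻¹))
      = ((2:ℝ≥0∞) ^ M * ((2:ℝ≥0∞) ^ M)⁻¹) * ((N : ℝ≥0∞)⁻¹ * 16⁻¹ * ((2:ℝ≥0∞) ^ M)⁻¹) := by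
        ring
    _ = (N : ℝ≥0∞)⁻¹ * 16⁻¹ * ((2:ℝ≥0∞) ^ M)⁻¹ := by
        rw [ENNReal.mul_inv_cancel h2M0 h2Mt, one_mul]

lemma geomSum : ∑' s : ℕ, ((2 : ℝ≥0∞) ^ s)⁻¹ = 2 := by
  simp_rw [ENNReal.inv_pow]
  rw [ENNReal.tsum_geometric, ENNReal.one_sub_inv_two, inv_inv]

lemma sixteenTwo : (16 : ℝ≥0∞)⁻¹ * 2 ≤ 4⁻¹ := by
  have h : (16 : ℝ≥0∞) = 8 * 2 := by norm_num
  rw [h, ENNReal.mul_inv (Or.inl (by norm_num)) (Or.inl (by norm_num)), mul_assoc,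
    ENNReal.inv_mul_cancel (by norm_num) (by norm_num), mul_one]
  exact ENNReal.inv_le_inv.2 (by norm_num)

theorem stmt16 {X : Type*} [MeasurableSpace X] (U : Set (Measure X)) (hU : U.Nonempty)
    (hprob : ∀ μ ∈ U, IsProbabilityMeasure μ)
    (ε : ℝ≥0∞) (hε : 0 < ε) (hε1 : ε ≤ 1)
    (hfrag : ∀ k : ℕ, ∃ B : Fin k → Set X, (∀ i, MeasurableSet (B i)) ∧
      Pairwise (Function.onFun Disjoint B) ∧ ∀ i, ε ≤ ⨆ μ ∈ U, μ (B i)) :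
    ∃ (A : ℕ → Set X) (μs : ℕ → Measure X),
      (∀ i, MeasurableSet (A i)) ∧ Pairwise (Function.onFun Disjoint A) ∧
      (∀ i, μs i ∈ U) ∧ (∀ i, ε / 2 ≤ μs i (A i)) ∧
      ∀ n : ℕ, 1 ≤ n → ∀ i j : ℕ, 2 ^ n ≤ i → i < 2 ^ (n + 1) →
        2 ^ n ≤ j → j < 2 ^ (n + 1) → i ≠ j →
        μs i (A j) ≤ ((2 : ℝ≥0∞) ^ n)⁻¹ := by
  classical
  obtain ⟨μ₀, hμ₀⟩ := hU
  have hεfin : ε ≠ ∞ := (hε1.trans_lt (by norm_num)).ne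
  obtain ⟨N, hN⟩ := ENNReal.exists_inv_nat_lt hε.ne'
  have hN0 : 0 < N := by
    rcases Nat.eq_zero_or_pos N with h | h
    · subst h; simp only [Nat.cast_zero, ENNReal.inv_zero] at hN
      exact absurd hN not_top_lt
    · exact h
  have base := fragBase U μ₀ hμ₀ hprob ε hε hε1 N hfrag
  obtain ⟨g, hg0, hgs⟩ : ∃ g : ℕ → (ℕ → Set X) × (ℕ → Measure X),
      g 0 = Classical.choose base ∧
      ∀ n, g (n + 1) = if h : fragInv U ε N n (g n)
        then Classical.choose (fragStepEx U hprob ε hε hε1 N hN0 hfrag n (g n) h) else g n :=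
    ⟨fun n => Nat.rec (Classical.choose base)
      (fun n p => if h : fragInv U ε N n p
        then Classical.choose (fragStepEx U hprob ε hε hε1 N hN0 hfrag n p h) else p) n,
     rfl, fun n => rfl⟩
  have hInv : ∀ n, fragInv U ε N n (g n) := by
    intro n
    induction n with
    | zero => rw [hg0]; exact Classical.choose_spec base
    | succ n ih =>
        rw [hgs n, dif_pos ih]
        exact (Classical.choose_spec (fragStepEx U hprob ε hε hε1 N hN0 hfrag n (g n) ih)).1
  have hAg : ∀ n i, i < 2 ^ (n + 1) →
      (g (n + 1)).1 i = (g n).1 i ∧ (g (n + 1)).2 i = (g n).2 i := by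
    intro n i hi
    rw [hgs n, dif_pos (hInv n)]
    exact (Classical.choose_spec
      (fragStepEx U hprob ε hε hε1 N hN0 hfrag n (g n) (hInv n))).2 i hi
  have hSt : ∀ n m, n ≤ m → ∀ i, i < 2 ^ (n + 1) →
      (g m).1 i = (g n).1 i ∧ (g m).2 i = (g n).2 i := by
    intro n m hnm
    induction m, hnm using Nat.le_induction with
    | base => exact fun i _ => ⟨rfl, rfl⟩
    | succ m hm ihm =>
      intro i hi
      have h1 := hAg m i (lt_of_lt_of_le hi (Nat.pow_le_pow_right (by norm_num) (by omega)))
      have h2 := ihm i hi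
      exact ⟨h1.1.trans h2.1, h1.2.trans h2.2⟩
  set stg : ℕ → ℕ := fun i => Nat.log 2 i with hstgdef
  have hstg1 : ∀ i, i < 2 ^ (stg i + 1) := fun i => Nat.lt_pow_succ_log_self (by norm_num) i
  have hstg3 : ∀ m i, 2 ^ m ≤ i → i < 2 ^ (m + 1) → stg i = m :=
    fun m i h1 h2 => Nat.log_eq_of_pow_le_of_lt_pow h1 h2
  have hstg5 : ∀ i, stg i ≠ 0 → 2 ^ (stg i) ≤ i := by
    intro i h
    refine Nat.pow_log_le_self 2 ?_
    intro h0
    subst h0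
    exact h (by simp [hstgdef])
  set Cs : ℕ → Set X := fun i => (g (stg i)).1 i with hCs
  set μs : ℕ → Measure X := fun i => (g (stg i)).2 i with hμs
  have hEval : ∀ n i, stg i ≤ n → (g n).1 i = Cs i ∧ (g n).2 i = μs i := by
    intro n i h
    exact hSt (stg i) n h i (hstg1 i)
  have Pmeas : ∀ i, MeasurableSet (Cs i) := fun i => (hInv (stg i)).1 i
  have Pmem : ∀ i, μs i ∈ U := fun i => (hInv (stg i)).2.1 i
  have Pself : ∀ i, ε / 2 + ε / 4 ≤ μs i (Cs i) := fun i => (hInv (stg i)).2.2.1 i (hstg1 i)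
  have Pdisj : ∀ i j, i ≠ j → stg i = stg j → Disjoint (Cs i) (Cs j) := by
    intro i j hij he
    have hj1 : j < 2 ^ (stg i + 1) := by rw [he]; exact hstg1 j
    have hOi : stg i = 0 ∨ 2 ^ (stg i) ≤ i := by
      rcases Nat.eq_zero_or_pos (stg i) with h0 | h1
      · exact Or.inl h0
      · exact Or.inr (hstg5 i (by omega))
    have hOj : stg i = 0 ∨ 2 ^ (stg i) ≤ j := by
      rcases Nat.eq_zero_or_pos (stg i) with h0 | h1
      · exact Or.inl h0
      · refine Or.inr ?_
        have hj5 := hstg5 j (by omega)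
        rwa [← he] at hj5
    have h := (hInv (stg i)).2.2.2.1 (stg i) le_rfl i j (hstg1 i) hj1 hOi hOj hij
    rwa [(hEval (stg i) i le_rfl).1, (hEval (stg i) j he.ge).1] at h
  have Pcross : ∀ n, 1 ≤ n → ∀ i j, 2 ^ n ≤ i → i < 2 ^ (n + 1) → 2 ^ n ≤ j →
      j < 2 ^ (n + 1) → i ≠ j → μs i (Cs j) ≤ ((2 ^ n : ℕ) : ℝ≥0∞)⁻¹ := by
    intro n hn i j hi1 hi2 hj1 hj2 hij
    have h := (hInv n).2.2.2.2.1 n hn le_rfl i j hi1 hi2 hj1 hj2 hij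
    rwa [(hEval n i (hstg3 n i hi1 hi2).le).2, (hEval n j (hstg3 n j hj1 hj2).le).1] at h
  have Pold : ∀ i j, stg i < stg j →
      μs i (Cs j) ≤ ((N * 4 ^ (stg j + 2) : ℕ) : ℝ≥0∞)⁻¹ := by
    intro i j hlt
    have hji : i < 2 ^ (stg j) :=
      lt_of_lt_of_le (hstg1 i) (Nat.pow_le_pow_right (by norm_num) (by omega))
    have hj1 : 2 ^ (stg j) ≤ j := hstg5 j (by omega)
    have h := (hInv (stg j)).2.2.2.2.2 (stg j) (by omega) le_rfl i j hji hj1 (hstg1 j)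
    rwa [(hEval (stg j) i (by omega)).2, (hEval (stg j) j le_rfl).1] at h
  set L : ℕ → Set X := fun i =>
    ⋃ (s : ℕ), ⋃ j ∈ Finset.Ico (2 ^ (stg i + 1 + s)) (2 ^ (stg i + 1 + s + 1)), Cs j with hL
  set A : ℕ → Set X := fun i => Cs i \ L i with hA
  have hMeasL : ∀ i, MeasurableSet (L i) :=
    fun i => MeasurableSet.iUnion fun s => MeasurableSet.iUnion fun j =>
      MeasurableSet.iUnion fun _ => Pmeas j
  have hCsubL : ∀ i j, stg i < stg j → Cs j ⊆ L i := by
    intro i j hlt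
    have hj1 : 2 ^ (stg j) ≤ j := hstg5 j (by omega)
    have hs : stg i + 1 + (stg j - (stg i + 1)) = stg j := by omega
    refine Set.subset_iUnion_of_subset (stg j - (stg i + 1)) ?_
    rw [hs]
    exact Set.subset_biUnion_of_mem (Finset.mem_Ico.2 ⟨hj1, hstg1 j⟩)
  have hLbound : ∀ i, μs i (L i) ≤ ε / 4 := by
    intro i
    have h1 : μs i (L i) ≤ ∑' s : ℕ, μs i
        (⋃ j ∈ Finset.Ico (2 ^ (stg i + 1 + s)) (2 ^ (stg i + 1 + s + 1)), Cs j) :=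
      measure_iUnion_le _
    have h2 : ∀ s : ℕ, μs i
        (⋃ j ∈ Finset.Ico (2 ^ (stg i + 1 + s)) (2 ^ (stg i + 1 + s + 1)), Cs j)
        ≤ (N : ℝ≥0∞)⁻¹ * 16⁻¹ * ((2 : ℝ≥0∞) ^ (stg i + 1 + s))⁻¹ := by
      intro s
      have hb : ∀ j ∈ Finset.Ico (2 ^ (stg i + 1 + s)) (2 ^ (stg i + 1 + s + 1)),
          μs i (Cs j) ≤ ((N * 4 ^ (stg i + 1 + s + 2) : ℕ) : ℝ≥0∞)⁻¹ := by
        intro j hj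
        rw [Finset.mem_Ico] at hj
        have hstgj : stg j = stg i + 1 + s := hstg3 _ j hj.1 hj.2
        have := Pold i j (by omega)
        rwa [hstgj] at this
      calc μs i (⋃ j ∈ Finset.Ico (2 ^ (stg i + 1 + s)) (2 ^ (stg i + 1 + s + 1)), Cs j)
          ≤ ∑ j ∈ Finset.Ico (2 ^ (stg i + 1 + s)) (2 ^ (stg i + 1 + s + 1)), μs i (Cs j) :=
            measure_biUnion_finset_le _ _
        _ ≤ (Finset.Ico (2 ^ (stg i + 1 + s)) (2 ^ (stg i + 1 + s + 1))).card •
              ((N * 4 ^ (stg i + 1 + s + 2) : ℕ) : ℝ≥0∞)⁻¹ :=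
            Finset.sum_le_card_nsmul _ _ _ hb
        _ = ((2 ^ (stg i + 1 + s) : ℕ) : ℝ≥0∞) *
              ((N * 4 ^ (stg i + 1 + s + 2) : ℕ) : ℝ≥0∞)⁻¹ := by
            rw [Nat.card_Ico, nsmul_eq_mul]
            congr 2
            have hp : (2 : ℕ) ^ (stg i + 1 + s + 1) = 2 ^ (stg i + 1 + s) * 2 :=
              pow_succ 2 _
            omega
        _ = (N : ℝ≥0∞)⁻¹ * 16⁻¹ * ((2 : ℝ≥0∞) ^ (stg i + 1 + s))⁻¹ := termEq N hN0 _
    calc μs i (L i)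
        ≤ ∑' s : ℕ, ((N : ℝ≥0∞)⁻¹ * 16⁻¹ * ((2 : ℝ≥0∞) ^ (stg i + 1 + s))⁻¹) :=
          h1.trans (ENNReal.tsum_le_tsum h2)
      _ = (N : ℝ≥0∞)⁻¹ * 16⁻¹ * ∑' s : ℕ, ((2 : ℝ≥0∞) ^ (stg i + 1 + s))⁻¹ :=
          ENNReal.tsum_mul_left
      _ ≤ (N : ℝ≥0∞)⁻¹ * 16⁻¹ * ∑' s : ℕ, ((2 : ℝ≥0∞) ^ s)⁻¹ := by
          refine mul_le_mul_right (ENNReal.tsum_le_tsum fun s => ?_) _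
          exact ENNReal.inv_le_inv.2 (pow_le_pow_right' one_le_two (by omega))
      _ = (N : ℝ≥0∞)⁻¹ * (16⁻¹ * 2) := by rw [geomSum, mul_assoc]
      _ ≤ ε * 4⁻¹ := mul_le_mul' hN.le sixteenTwo
      _ = ε / 4 := (div_eq_mul_inv ε 4).symm
  have PmeasA : ∀ i, MeasurableSet (A i) := fun i => (Pmeas i).diff (hMeasL i)
  have PselfA : ∀ i, ε / 2 ≤ μs i (A i) := by
    intro i
    have hsub : Cs i ⊆ A i ∪ L i := by
      intro x hx
      by_cases hxL : x ∈ L i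
      · exact Or.inr hxL
      · exact Or.inl ⟨hx, hxL⟩
    have h1 : ε / 2 + ε / 4 ≤ μs i (A i) + ε / 4 :=
      (Pself i).trans ((measure_mono hsub).trans ((measure_union_le _ _).trans
        (add_le_add_right (hLbound i) _)))
    have h4le : ε / 4 ≤ ε := by
      rw [div_eq_mul_inv]
      calc ε * 4⁻¹ ≤ ε * 1 := mul_le_mul_right (ENNReal.inv_le_one.2 (by norm_num)) ε
        _ = ε := mul_one ε
    exact (ENNReal.add_le_add_iff_right (ne_top_of_le_ne_top hεfin h4le)).1 h1
  have PdisjA : Pairwise (Function.onFun Disjoint A) := by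
    have key : ∀ i j, stg i < stg j → Disjoint (A i) (A j) := by
      intro i j hlt
      have h1 : Disjoint (A i) (L i) := Set.disjoint_sdiff_left
      exact h1.mono_right (Set.diff_subset.trans (hCsubL i j hlt))
    intro i j hij
    rcases lt_trichotomy (stg i) (stg j) with h | h | h
    · exact key i j h
    · exact (Pdisj i j hij h).mono Set.diff_subset Set.diff_subset
    · exact (key j i h).symm
  refine ⟨A, μs, PmeasA, PdisjA, Pmem, PselfA, ?_⟩
  intro n hn i j hi1 hi2 hj1 hj2 hij
  have h := Pcross n hn i j hi1 hi2 hj1 hj2 hij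
  have h2 : μs i (A j) ≤ μs i (Cs j) := measure_mono Set.diff_subset
  refine h2.trans (h.trans_eq ?_)
  push_cast
  rfl
end

section
/- Let μ₀ be a probability measure on X, ρ : [0,1] → ℝ≥0 non-decreasing with ρ(t)/t non-increasing on (0,1], and let U be a (μ₀, ρ)-generalized smooth family. Fix ε ∈ (0,1] and set η := ρ(ε)/ε. Then for every μ ∈ U (with μ ≪ μ₀), the mass that μ places on the superlevel set of its density exceeding η is at most ρ(ε): μ({ x : dμ/dμ₀(x) > η }) ≤ ρ(ε). -/
open MeasureTheory Set Filter ENNReal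

theorem stmt19 {X : Type*} [MeasurableSpace X] (μ₀ : Measure X) [IsProbabilityMeasure μ₀]
    (U : Set (Measure X)) (hprob : ∀ μ ∈ U, IsProbabilityMeasure μ)
    (ρ : ℝ≥0∞ → ℝ≥0∞) (hmono : Monotone ρ)
    (hratio : ∀ s t : ℝ≥0∞, 0 < s → s ≤ t → t ≤ 1 → ρ t / t ≤ ρ s / s)
    (hsmooth : ∀ μ ∈ U, ∀ A : Set X, MeasurableSet A → μ A ≤ ρ (μ₀ A))
    (ε : ℝ≥0∞) (hε : 0 < ε) (hε1 : ε ≤ 1) :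
    ∀ μ ∈ U, μ ≪ μ₀ → μ {x | ρ ε / ε < μ.rnDeriv μ₀ x} ≤ ρ ε := by
  intro μ hμU hac
  have hprobμ := hprob μ hμU
  set η := ρ ε / ε with hη
  set f := μ.rnDeriv μ₀ with hf
  have hfm : Measurable f := μ.measurable_rnDeriv μ₀
  set A := {x | η < f x} with hA
  have hAm : MeasurableSet A := measurableSet_lt measurable_const hfm
  by_cases hηtop : η = ∞
  · have hAe : A = ∅ := by
      ext x
      simp [hA, hηtop]
    simp [hAe]
  set t := μ₀ A with ht
  have ht1 : t ≤ 1 := prob_le_one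
  have hμA : μ A = ∫⁻ x in A, f x ∂μ₀ := (Measure.setLIntegral_rnDeriv hac A).symm
  have hμAρ : μ A ≤ ρ t := hsmooth μ hμU A hAm
  by_cases hle : t ≤ ε
  · exact hμAρ.trans (hmono hle)
  push_neg at hle
  exfalso
  have htne0 : t ≠ 0 := (hε.trans hle).ne'
  have htnetop : t ≠ ∞ := (lt_of_le_of_lt ht1 one_lt_top).ne
  -- ρ t ≤ η * t
  have hρt : ρ t ≤ η * t := by
    have h1 : ρ t / t ≤ η := hratio ε t hε hle.le ht1
    have h2 : ρ t = ρ t / t * t := (ENNReal.div_mul_cancel htne0 htnetop).symm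
    rw [h2]
    exact mul_le_mul_left h1 t
  have hηt : η * t ≠ ∞ := ENNReal.mul_ne_top hηtop htnetop
  -- strict lower bound
  set δ := ∫⁻ x in A, (f x - η) ∂μ₀ with hδ
  have hsplit : ∫⁻ x in A, f x ∂μ₀ = η * t + δ := by
    have : ∀ x ∈ A, f x = η + (f x - η) := by
      intro x hx
      exact (add_tsub_cancel_of_le (le_of_lt hx)).symm
    rw [setLIntegral_congr_fun hAm this,
      lintegral_add_left measurable_const, setLIntegral_const]
  have hδpos : 0 < δ := by
    rw [hδ, ← lintegral_indicator (f := fun x => f x - η) hAm,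
      lintegral_pos_iff_support (f := A.indicator fun x => f x - η) ((hfm.sub measurable_const).indicator hAm)]
    · have hsub : A ⊆ Function.support (A.indicator fun x => f x - η) := by
        intro x hx
        simp only [Function.mem_support, Set.indicator_of_mem hx]
        exact (tsub_pos_of_lt hx).ne'
      calc (0 : ℝ≥0∞) < ε := hε
        _ < t := hle
        _ ≤ μ₀ (Function.support (A.indicator fun x => f x - η)) := measure_mono hsub
  have : η * t < μ A := by
    rw [hμA, hsplit]
    exact ENNReal.lt_add_right hηt hδpos.ne'
  exact absurd (hμAρ.trans hρt) this.not_ge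
end
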